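/- arXiv:2006.14272 — 3 statements merged into one kernel-verified Lean document; each statement's English description precedes it below -/
import Mathlib

section
/- Let P be a probability measure on (Ω, 𝓕) such that (Ω, 𝓕, P) is atomless, and let H : B_b → ℝ be a convex, law-invariant premium principle (with C = B_b) that is continuous from above, i.e. inf_n H(X_n) = 0 for every sequence (X_n) in B_b with X_n ≥ X_{n+1} pointwise for all n and pointwise infimum inf_n X_n = 0. Then H carries a safety loading with respect to P: H(X) ≥ ∫ X dP for all X ∈ B_b. -/
open MeasureTheory

/-- The set of bounded measurable functions `Ω → ℝ`. -/
def Bb (Ω : Type*) [MeasurableSpace Ω] : Set (Ω → ℝ) :=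
  {X | Measurable X ∧ ∃ c : ℝ, ∀ ω, |X ω| ≤ c}

/-- `H` is a premium principle on `C`: (P1) cash additivity and
(P2) `H 0 = 0` and nonnegativity on nonnegative claims. -/
def IsPremium {Ω : Type*} (C : Set (Ω → ℝ)) (H : (Ω → ℝ) → ℝ) : Prop :=
  (∀ X ∈ C, ∀ m : ℝ, H (fun ω => X ω + m) = H X + m) ∧
  H (fun _ => 0) = 0 ∧
  ∀ X ∈ C, (∀ ω, 0 ≤ X ω) → 0 ≤ H X

/-- `R` is a (monetary) risk measure on `B_b`. -/
def IsRisk {Ω : Type*} [MeasurableSpace Ω] (R : (Ω → ℝ) → ℝ) : Prop :=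
  (∀ X ∈ Bb Ω, ∀ m : ℝ, R (fun ω => X ω + m) = R X + m) ∧
  R (fun _ => 0) = 0 ∧
  ∀ X ∈ Bb Ω, ∀ Y ∈ Bb Ω, (∀ ω, X ω ≤ Y ω) → R X ≤ R Y

/-- `D` is a deviation measure on `C`. -/
def IsDeviation {Ω : Type*} (C : Set (Ω → ℝ)) (D : (Ω → ℝ) → ℝ) : Prop :=
  (∀ X ∈ C, ∀ m : ℝ, D (fun ω => X ω + m) = D X) ∧
  D (fun _ => 0) = 0 ∧
  ∀ X ∈ C, 0 ≤ D X

/-- The maximal risk measure `R_Max(X) = inf {H X₀ | X₀ ∈ C, X₀ ≥ X}`. -/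
noncomputable def RMax {Ω : Type*} (C : Set (Ω → ℝ)) (H : (Ω → ℝ) → ℝ) (X : Ω → ℝ) : ℝ :=
  sInf {y | ∃ X₀ ∈ C, (∀ ω, X ω ≤ X₀ ω) ∧ H X₀ = y}

/-- The minimal deviation measure `D_Min = H - R_Max`. -/
noncomputable def DMin {Ω : Type*} (C : Set (Ω → ℝ)) (H : (Ω → ℝ) → ℝ) (X : Ω → ℝ) : ℝ :=
  H X - RMax C H X

/-- A normalized positive linear functional on `B_b` (a finitely additive probability). -/
def IsNPLF {Ω : Type*} [MeasurableSpace Ω] (μ : (Ω → ℝ) → ℝ) : Prop :=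
  (∀ X ∈ Bb Ω, ∀ Y ∈ Bb Ω, μ (fun ω => X ω + Y ω) = μ X + μ Y) ∧
  (∀ X ∈ Bb Ω, ∀ c : ℝ, μ (fun ω => c * X ω) = c * μ X) ∧
  (∀ X ∈ Bb Ω, (∀ ω, 0 ≤ X ω) → 0 ≤ μ X) ∧
  μ (fun _ => 1) = 1

/-- The convex dual `H*(μ) = sup_{X ∈ C} (μ X - H X)`, valued in `EReal`. -/
noncomputable def Hstar {Ω : Type*} (C : Set (Ω → ℝ)) (H : (Ω → ℝ) → ℝ)
    (μ : (Ω → ℝ) → ℝ) : EReal :=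
  ⨆ X ∈ C, ((μ X - H X : ℝ) : EReal)

/-- `H` is convex on `C`. -/
def IsConvexOn {Ω : Type*} (C : Set (Ω → ℝ)) (H : (Ω → ℝ) → ℝ) : Prop :=
  ∀ X ∈ C, ∀ Y ∈ C, ∀ l : ℝ, 0 ≤ l → l ≤ 1 →
    H (fun ω => l * X ω + (1 - l) * Y ω) ≤ l * H X + (1 - l) * H Y



set_option linter.unusedSectionVars false
set_option linter.unusedVariables false

section Development
open ENNReal Set

section Sier
variable {Ω : Type*} [MeasurableSpace Ω] {P : Measure Ω} [IsProbabilityMeasure P]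

def Atomless (P : Measure Ω) : Prop :=
  ∀ A : Set Ω, MeasurableSet A → 0 < P A →
      ∃ B : Set Ω, MeasurableSet B ∧ B ⊆ A ∧ 0 < P B ∧ P B < P A

lemma atomless_halve (hat : Atomless P) {A : Set Ω} (hA : MeasurableSet A) (h0 : 0 < P A) :
    ∃ B, MeasurableSet B ∧ B ⊆ A ∧ 0 < P B ∧ 2 * P B ≤ P A := by
  obtain ⟨B, hB, hBA, hB0, hBlt⟩ := hat A hA h0
  rcases le_or_gt (P B) (P A / 2) with h | h
  · exact ⟨B, hB, hBA, hB0, by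
      calc 2 * P B ≤ 2 * (P A / 2) := by exact mul_le_mul_right h 2
      _ = P A := ENNReal.mul_div_cancel two_ne_zero ENNReal.ofNat_ne_top⟩
  · refine ⟨A \ B, hA.diff hB, diff_subset, ?_, ?_⟩
    · have : P B < P A := hBlt
      have hd : P (A \ B) = P A - P B := measure_diff hBA hB.nullMeasurableSet (measure_ne_top P B)
      rw [hd]
      exact tsub_pos_of_lt hBlt
    · have hd : P (A \ B) = P A - P B := measure_diff hBA hB.nullMeasurableSet (measure_ne_top P B)
      have h1 : P A ≤ P B + P A / 2 := by
        conv_lhs => rw [← ENNReal.add_halves (P A)]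
        exact add_le_add_left h.le _
      have h2 : P A - P B ≤ P A / 2 := tsub_le_iff_left.mpr h1
      calc 2 * P (A \ B) = 2 * (P A - P B) := by rw [hd]
      _ ≤ 2 * (P A / 2) := mul_le_mul_right h2 2
      _ = P A := ENNReal.mul_div_cancel two_ne_zero ENNReal.ofNat_ne_top

lemma atomless_small (hat : Atomless P) {A : Set Ω} (hA : MeasurableSet A) (h0 : 0 < P A)
    {ε : ℝ≥0∞} (hε : 0 < ε) :
    ∃ B, MeasurableSet B ∧ B ⊆ A ∧ 0 < P B ∧ P B ≤ ε := by
  have key : ∀ n : ℕ, ∃ B, MeasurableSet B ∧ B ⊆ A ∧ 0 < P B ∧ P B ≤ 2⁻¹ ^ n * P A := by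
    intro n
    induction n with
    | zero => exact ⟨A, hA, subset_rfl, h0, by simp⟩
    | succ n ih =>
      obtain ⟨B, hB, hBA, hB0, hBle⟩ := ih
      obtain ⟨C, hC, hCB, hC0, hChalf⟩ := atomless_halve hat hB hB0
      refine ⟨C, hC, hCB.trans hBA, hC0, ?_⟩
      have : P C ≤ 2⁻¹ * P B := by
        rw [← ENNReal.div_eq_inv_mul, ENNReal.le_div_iff_mul_le (Or.inl two_ne_zero) (Or.inl ENNReal.ofNat_ne_top), mul_comm]
        exact hChalf
      calc P C ≤ 2⁻¹ * P B := this
      _ ≤ 2⁻¹ * (2⁻¹ ^ n * P A) := mul_le_mul_right hBle _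
      _ = 2⁻¹ ^ (n + 1) * P A := by ring
  obtain ⟨n, hn⟩ := ENNReal.exists_inv_two_pow_lt hε.ne'
  obtain ⟨B, hB, hBA, hB0, hBle⟩ := key n
  refine ⟨B, hB, hBA, hB0, hBle.trans ?_⟩
  calc 2⁻¹ ^ n * P A ≤ 2⁻¹ ^ n * 1 := mul_le_mul_right prob_le_one _
  _ = 2⁻¹ ^ n := mul_one _
  _ ≤ ε := hn.le

end Sier

section SierMain
variable {Ω : Type*} [MeasurableSpace Ω] {P : Measure Ω} [IsProbabilityMeasure P]

lemma atomless_exists_subset_measure_eq (hat : Atomless P) {A : Set Ω} (hA : MeasurableSet A)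
    {t : ℝ≥0∞} (ht : t ≤ P A) :
    ∃ C, MeasurableSet C ∧ C ⊆ A ∧ P C = t := by
  classical
  -- the admissible enlargements of C
  set 𝒜 : Set Ω → Set (Set Ω) :=
    fun C => {B | MeasurableSet B ∧ B ⊆ A \ C ∧ P C + P B ≤ t} with h𝒜
  set S := {C : Set Ω // MeasurableSet C ∧ C ⊆ A ∧ P C ≤ t} with hS
  have hstep : ∀ C : S, ∃ C' : S, C.1 ⊆ C'.1 ∧ ∀ B ∈ 𝒜 C.1, P C.1 + P B / 2 ≤ P C'.1 := by
    rintro ⟨C, hCm, hCA, hCt⟩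
    set δ : ℝ≥0∞ := ⨆ B : 𝒜 C, P B.1 with hδ
    rcases eq_or_ne δ 0 with h0 | h0
    · refine ⟨⟨C, hCm, hCA, hCt⟩, subset_rfl, ?_⟩
      intro B hB
      have : P B ≤ δ := le_iSup_of_le (⟨B, hB⟩ : 𝒜 C) le_rfl
      rw [h0] at this
      simp only [nonpos_iff_eq_zero] at this
      simp [this]
    · have hδtop : δ ≠ ⊤ := by
        refine ne_top_of_le_ne_top (@ENNReal.one_ne_top) (iSup_le fun B => prob_le_one)
      have hhalf : δ / 2 < δ := ENNReal.half_lt_self h0 hδtop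
      rw [hδ, lt_iSup_iff] at hhalf
      obtain ⟨⟨B, hB⟩, hBgt⟩ := hhalf
      obtain ⟨hBm, hBsub, hBt⟩ := hB
      have hdisj : Disjoint C B := by
        refine Set.disjoint_left.mpr fun x hx hxB => (hBsub hxB).2 hx
      have hPU : P (C ∪ B) = P C + P B := measure_union hdisj.symm.symm hBm
      refine ⟨⟨C ∪ B, hCm.union hBm, Set.union_subset hCA (hBsub.trans Set.diff_subset), ?_⟩,
        Set.subset_union_left, ?_⟩
      · rw [hPU]; exact hBt
      · intro B' hB'
        have h1 : P B' ≤ δ := le_iSup_of_le (⟨B', hB'⟩ : 𝒜 C) le_rfl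
        have h2 : P B' / 2 ≤ δ / 2 := by
          exact ENNReal.div_le_div_right h1 2
        simp only [hPU]
        exact add_le_add_right (h2.trans hBgt.le) _
  choose stepf hsub hkey using hstep
  have hC0t : P (∅ : Set Ω) ≤ t := by simp
  set C0 : S := ⟨∅, MeasurableSet.empty, Set.empty_subset A, hC0t⟩ with hC0
  set seq : ℕ → S := fun n => Nat.rec C0 (fun _ C => stepf C) n with hseqdef
  have hseqsucc : ∀ n, seq (n + 1) = stepf (seq n) := fun n => rfl
  have hmono : Monotone fun n => (seq n).1 := by
    apply monotone_nat_of_le_succ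
    intro n
    rw [hseqsucc]
    exact hsub (seq n)
  set C : Set Ω := ⋃ n, (seq n).1 with hCdef
  have hCm : MeasurableSet C := MeasurableSet.iUnion fun n => (seq n).2.1
  have hCA : C ⊆ A := Set.iUnion_subset fun n => (seq n).2.2.1
  have hPC : P C = ⨆ n, P (seq n).1 := hmono.directed_le.measure_iUnion
  have hPCt : P C ≤ t := by
    rw [hPC]; exact iSup_le fun n => (seq n).2.2.2
  rcases eq_or_lt_of_le hPCt with heq | hlt
  · exact ⟨C, hCm, hCA, heq⟩
  exfalso
  have hεpos : 0 < t - P C := tsub_pos_of_lt hlt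
  have hACm : MeasurableSet (A \ C) := hA.diff hCm
  have hACpos : 0 < P (A \ C) := by
    have : P (A \ C) = P A - P C := measure_diff hCA hCm.nullMeasurableSet (measure_ne_top P C)
    rw [this]
    exact lt_of_lt_of_le hεpos (tsub_le_tsub_right ht _)
  obtain ⟨B', hB'm, hB'sub, hB'0, hB'le⟩ := atomless_small hat hACm hACpos hεpos
  have hmem : ∀ n, B' ∈ 𝒜 (seq n).1 := by
    intro n
    refine ⟨hB'm, hB'sub.trans (Set.diff_subset_diff_right (by rw [hCdef]; exact Set.subset_iUnion (fun k => (seq k).1) n)), ?_⟩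
    have h1 : P (seq n).1 ≤ P C := measure_mono (Set.subset_iUnion (fun n => (seq n).1) n)
    calc P (seq n).1 + P B' ≤ P C + (t - P C) := add_le_add h1 hB'le
    _ = t := add_tsub_cancel_of_le hlt.le
  set β : ℝ≥0∞ := P B' / 2 with hβ
  have hβ0 : β ≠ 0 := by
    rw [hβ]
    simp [ENNReal.div_eq_zero_iff, hB'0.ne']
  have hgrow : ∀ n : ℕ, (n : ℝ≥0∞) * β ≤ P (seq n).1 := by
    intro n
    induction n with
    | zero => simp
    | succ n ih =>
      have h1 : P (seq n).1 + β ≤ P (seq (n + 1)).1 := by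
        rw [hseqsucc]; exact hkey (seq n) B' (hmem n)
      push_cast
      calc ((n : ℝ≥0∞) + 1) * β = (n : ℝ≥0∞) * β + β := by ring
      _ ≤ P (seq n).1 + β := add_le_add_left ih _
      _ ≤ P (seq (n + 1)).1 := h1
  have hβub : ∀ n : ℕ, (n : ℝ≥0∞) ≤ 1 / β := by
    intro n
    rw [ENNReal.le_div_iff_mul_le (Or.inl hβ0) (Or.inr ENNReal.one_ne_top)]
    exact le_trans (hgrow n) prob_le_one
  obtain ⟨n, hn⟩ := ENNReal.exists_nat_gt (by
    simp only [one_div]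
    exact ENNReal.inv_ne_top.mpr hβ0 : 1 / β ≠ ⊤)
  exact absurd (hβub n) (not_le.mpr hn)

lemma atomless_exists_between (hat : Atomless P) {A B : Set Ω}
    (hA : MeasurableSet A) (hB : MeasurableSet B) (hAB : A ⊆ B) {t : ℝ≥0∞}
    (h1 : P A ≤ t) (h2 : t ≤ P B) :
    ∃ C, MeasurableSet C ∧ A ⊆ C ∧ C ⊆ B ∧ P C = t := by
  have hd : P (B \ A) = P B - P A := measure_diff hAB hA.nullMeasurableSet (measure_ne_top P A)
  have ht' : t - P A ≤ P (B \ A) := by rw [hd]; exact tsub_le_tsub_right h2 _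
  obtain ⟨D, hDm, hDsub, hDP⟩ := atomless_exists_subset_measure_eq hat (hB.diff hA) ht'
  have hdisj : Disjoint A D := Set.disjoint_left.mpr fun x hx hxD => (hDsub hxD).2 hx
  refine ⟨A ∪ D, hA.union hDm, Set.subset_union_left,
    Set.union_subset hAB (hDsub.trans Set.diff_subset), ?_⟩
  rw [measure_union hdisj hDm, hDP, add_tsub_cancel_of_le h1]

end SierMain

section Helpers
variable {Ω : Type*} [MeasurableSpace Ω]

lemma Bb.add {X Y : Ω → ℝ} (hX : X ∈ Bb Ω) (hY : Y ∈ Bb Ω) :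
    (fun ω => X ω + Y ω) ∈ Bb Ω := by
  obtain ⟨hXm, cX, hcX⟩ := hX
  obtain ⟨hYm, cY, hcY⟩ := hY
  exact ⟨hXm.add hYm, cX + cY, fun ω =>
    (abs_add_le _ _).trans (add_le_add (hcX ω) (hcY ω))⟩

lemma Bb.smul (c : ℝ) {X : Ω → ℝ} (hX : X ∈ Bb Ω) : (fun ω => c * X ω) ∈ Bb Ω := by
  obtain ⟨hXm, cX, hcX⟩ := hX
  refine ⟨(measurable_const_mul c).comp hXm, |c| * cX, fun ω => ?_⟩
  rw [abs_mul]
  exact mul_le_mul_of_nonneg_left (hcX ω) (abs_nonneg c)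

lemma Bb.const (m : ℝ) : (fun _ : Ω => m) ∈ Bb Ω :=
  ⟨measurable_const, |m|, fun _ => le_rfl⟩

lemma Bb.addConst {X : Ω → ℝ} (hX : X ∈ Bb Ω) (m : ℝ) : (fun ω => X ω + m) ∈ Bb Ω :=
  Bb.add hX (Bb.const m)

variable {H : (Ω → ℝ) → ℝ} (hH : IsPremium (Bb Ω) H)

include hH

lemma H_const (m : ℝ) : H (fun _ : Ω => m) = m := by
  have h := hH.1 (fun _ => 0) (Bb.const 0) m
  simp only [zero_add] at h
  rw [h, hH.2.1, zero_add]

lemma H_ge {W : Ω → ℝ} (hW : W ∈ Bb Ω) {m : ℝ} (hm : ∀ ω, m ≤ W ω) : m ≤ H W := by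
  have hW' : (fun ω => W ω + (-m)) ∈ Bb Ω := Bb.addConst hW (-m)
  have h1 := hH.1 _ hW' m
  have h2 : (fun ω => (W ω + (-m)) + m) = W := by funext ω; ring
  rw [h2] at h1
  have h3 : 0 ≤ H (fun ω => W ω + (-m)) := hH.2.2 _ hW' (fun ω => by linarith [hm ω])
  linarith

end Helpers

section LemmaA
variable {Ω : Type*} [MeasurableSpace Ω]

lemma upper_semicontinuity {H : (Ω → ℝ) → ℝ} (hH : IsPremium (Bb Ω) H)
    (hconv : IsConvexOn (Bb Ω) H)
    (hcont : ∀ X : ℕ → Ω → ℝ, (∀ n, X n ∈ Bb Ω) →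
      (∀ n, ∀ ω, X (n + 1) ω ≤ X n ω) → (∀ ω, (⨅ n, X n ω) = 0) →
      (⨅ n, H (X n)) = 0)
    {X : Ω → ℝ} (hX : X ∈ Bb Ω) (Z : ℕ → Ω → ℝ)
    (hZb : ∀ k, Z k ∈ Bb Ω) (hZ0 : ∀ k ω, 0 ≤ Z k ω)
    (hdec : ∀ k ω, Z (k + 1) ω ≤ Z k ω) (hinf : ∀ ω, (⨅ k, Z k ω) = 0) :
    (⨅ k, H (fun ω => X ω + Z k ω)) ≤ H X := by
  obtain ⟨hXm, cX, hcX⟩ := id hX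
  set L : ℝ := ⨅ k, H (fun ω => X ω + Z k ω) with hL
  have hXZb : ∀ k, (fun ω => X ω + Z k ω) ∈ Bb Ω := fun k => Bb.add hX (hZb k)
  have hlb : ∀ k, -cX ≤ H (fun ω => X ω + Z k ω) := by
    intro k
    refine H_ge hH (hXZb k) fun ω => ?_
    have := abs_le.mp (hcX ω)
    have := hZ0 k ω
    linarith
  have hbdd : BddBelow (Set.range fun k => H (fun ω => X ω + Z k ω)) :=
    ⟨-cX, by rintro y ⟨k, rfl⟩; exact hlb k⟩
  have hLle : ∀ k, L ≤ H (fun ω => X ω + Z k ω) := fun k => ciInf_le hbdd k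
  set D : ℝ := H (fun ω => 2 * X ω) - 2 * H X with hD
  -- main estimate for each m ≥ 2
  have main : ∀ m : ℕ, 2 ≤ m → L ≤ H X + (m : ℝ)⁻¹ * D := by
    intro m hm
    have hm0 : (0 : ℝ) < m := by positivity
    have hminv : (m : ℝ)⁻¹ ≤ 2⁻¹ := by
      rw [inv_le_inv₀ hm0 (by norm_num)]
      exact_mod_cast hm
    have hminvpos : (0 : ℝ) < (m : ℝ)⁻¹ := by positivity
    set a : ℝ := 1 - (m : ℝ)⁻¹ with ha
    have ha0 : (0 : ℝ) < a := by rw [ha]; linarith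
    have ha1 : a ≤ 1 := by rw [ha]; linarith
    set t : ℝ := a⁻¹ with hht
    have ht1 : 1 ≤ t := by
      rw [hht, le_inv_comm₀ one_pos ha0]
      simpa using ha1
    have ht2 : t ≤ 2 := by
      rw [hht, inv_le_comm₀ ha0 (by norm_num)]
      rw [ha]; linarith
    -- step 2 : H (t • X) ≤ (2 - t) H X + (t - 1) H (2X)
    have hX2 : (fun ω => 2 * X ω) ∈ Bb Ω := Bb.smul 2 hX
    have hXt : (fun ω => t * X ω) ∈ Bb Ω := Bb.smul t hX
    have hXa : (fun ω => a⁻¹ * X ω) ∈ Bb Ω := Bb.smul a⁻¹ hX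
    have step2 : H (fun ω => t * X ω) ≤ (2 - t) * H X + (t - 1) * H (fun ω => 2 * X ω) := by
      have h := hconv X hX (fun ω => 2 * X ω) hX2 (2 - t) (by linarith) (by linarith)
      have heq : (fun ω => (2 - t) * X ω + (1 - (2 - t)) * (2 * X ω)) = fun ω => t * X ω := by
        funext ω; ring
      rw [heq] at h
      calc H (fun ω => t * X ω) ≤ (2 - t) * H X + (1 - (2 - t)) * H (fun ω => 2 * X ω) := h
      _ = (2 - t) * H X + (t - 1) * H (fun ω => 2 * X ω) := by ring
    -- step 1 for each k
    have step1 : ∀ k, H (fun ω => X ω + Z k ω) ≤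
        a * H (fun ω => a⁻¹ * X ω) + (m : ℝ)⁻¹ * H (fun ω => (m : ℝ) * Z k ω) := by
      intro k
      have hmZ : (fun ω => (m : ℝ) * Z k ω) ∈ Bb Ω := Bb.smul _ (hZb k)
      have h := hconv _ hXa _ hmZ a ha0.le ha1
      have heq : (fun ω => a * (a⁻¹ * X ω) + (1 - a) * ((m : ℝ) * Z k ω)) =
          fun ω => X ω + Z k ω := by
        funext ω
        have h1 : a * (a⁻¹ * X ω) = X ω := by
          rw [← mul_assoc, mul_inv_cancel₀ ha0.ne', one_mul]
        have h2 : (1 - a) * ((m : ℝ) * Z k ω) = Z k ω := by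
          rw [ha]; field_simp; ring
        rw [h1, h2]
      rw [heq] at h
      calc H (fun ω => X ω + Z k ω) ≤ a * H (fun ω => a⁻¹ * X ω) +
          (1 - a) * H (fun ω => (m : ℝ) * Z k ω) := h
      _ = a * H (fun ω => a⁻¹ * X ω) + (m : ℝ)⁻¹ * H (fun ω => (m : ℝ) * Z k ω) := by
        rw [ha]; ring_nf
    -- multiply step2 by a and compute coefficients
    have ha2 : a * (2 - t) = 1 - 2 * (m : ℝ)⁻¹ := by
      rw [hht, mul_sub, mul_inv_cancel₀ ha0.ne', ha]; ring
    have ha3 : a * (t - 1) = (m : ℝ)⁻¹ := by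
      rw [hht, mul_sub, mul_inv_cancel₀ ha0.ne', ha]; ring
    have step2' : a * H (fun ω => a⁻¹ * X ω) ≤
        (1 - 2 * (m : ℝ)⁻¹) * H X + (m : ℝ)⁻¹ * H (fun ω => 2 * X ω) := by
      have heq : (fun ω => a⁻¹ * X ω) = fun ω => t * X ω := by rw [hht]
      rw [heq]
      calc a * H (fun ω => t * X ω)
          ≤ a * ((2 - t) * H X + (t - 1) * H (fun ω => 2 * X ω)) :=
            mul_le_mul_of_nonneg_left step2 ha0.le
      _ = (a * (2 - t)) * H X + (a * (t - 1)) * H (fun ω => 2 * X ω) := by ring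
      _ = (1 - 2 * (m : ℝ)⁻¹) * H X + (m : ℝ)⁻¹ * H (fun ω => 2 * X ω) := by
        rw [ha2, ha3]
    set Cm : ℝ := (1 - 2 * (m : ℝ)⁻¹) * H X + (m : ℝ)⁻¹ * H (fun ω => 2 * X ω) with hCm
    -- inf over k of H(m Z k) is 0
    have hinfm : (⨅ k, H (fun ω => (m : ℝ) * Z k ω)) = 0 := by
      apply hcont
      · exact fun k => Bb.smul _ (hZb k)
      · exact fun k ω => mul_le_mul_of_nonneg_left (hdec k ω) hm0.le
      · intro ω
        rw [← Real.mul_iInf_of_nonneg hm0.le, hinf ω, mul_zero]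
    -- conclude L ≤ Cm
    have hLCm : L ≤ Cm := by
      have key : ∀ k, (m : ℝ) * (L - Cm) ≤ H (fun ω => (m : ℝ) * Z k ω) := by
        intro k
        have h1 : L ≤ Cm + (m : ℝ)⁻¹ * H (fun ω => (m : ℝ) * Z k ω) := by
          calc L ≤ H (fun ω => X ω + Z k ω) := hLle k
          _ ≤ a * H (fun ω => a⁻¹ * X ω) + (m : ℝ)⁻¹ * H (fun ω => (m : ℝ) * Z k ω) := step1 k
          _ ≤ Cm + (m : ℝ)⁻¹ * H (fun ω => (m : ℝ) * Z k ω) := by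
            exact add_le_add_left step2' _
        have hm1 : (m : ℝ) * (m : ℝ)⁻¹ = 1 := mul_inv_cancel₀ hm0.ne'
        have h1' : L - Cm ≤ (m : ℝ)⁻¹ * H (fun ω => (m : ℝ) * Z k ω) := by linarith
        have h2' := mul_le_mul_of_nonneg_left h1' hm0.le
        rw [← mul_assoc, hm1, one_mul] at h2'
        exact h2'
      have h2 : (m : ℝ) * (L - Cm) ≤ ⨅ k, H (fun ω => (m : ℝ) * Z k ω) :=
        le_ciInf key
      rw [hinfm] at h2
      nlinarith [h2, hm0]
    calc L ≤ Cm := hLCm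
    _ = H X + (m : ℝ)⁻¹ * D := by rw [hCm, hD]; ring
  -- let m → ∞
  by_contra hcon
  push_neg at hcon
  set e : ℝ := L - H X with he
  have he0 : 0 < e := by rw [he]; linarith
  obtain ⟨m, hm⟩ := exists_nat_gt (max 2 (D / e))
  have hm2 : 2 ≤ m := by
    have : (2 : ℝ) ≤ max 2 (D / e) := le_max_left _ _
    exact_mod_cast this.trans hm.le
  have hmDe : D / e < m := (le_max_right _ _).trans_lt hm
  have hm0 : (0 : ℝ) < m := by positivity
  have h1 : e ≤ (m : ℝ)⁻¹ * D := by
    have := main m hm2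
    rw [he]; linarith
  have h2 : D < m * e := (div_lt_iff₀ he0).mp hmDe
  have h3 : (m : ℝ) * e ≤ D := by
    rw [← mul_le_mul_iff_right₀ hm0] at h1
    calc (m : ℝ) * e ≤ (m : ℝ) * ((m : ℝ)⁻¹ * D) := h1
    _ = D := by field_simp
  linarith

end LemmaA

section LemB
variable {Ω : Type*} [MeasurableSpace Ω] {P : Measure Ω} [IsProbabilityMeasure P]

lemma convexOn_H {H : (Ω → ℝ) → ℝ} (hconv : IsConvexOn (Bb Ω) H) :
    ConvexOn ℝ (Bb Ω) H := by
  constructor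
  · intro X hX Y hY a b ha hb hab
    exact Bb.add (Bb.smul a hX) (Bb.smul b hY)
  · intro X hX Y hY a b ha hb hab
    have h := hconv X hX Y hY a ha (by linarith)
    have heq : (fun ω => a * X ω + (1 - a) * Y ω) = a • X + b • Y := by
      funext ω
      have : b = 1 - a := by linarith
      simp [this, smul_eq_mul]
    rw [heq] at h
    have hb' : (1 : ℝ) - a = b := by linarith
    calc H (a • X + b • Y) ≤ a * H X + (1 - a) * H Y := h
    _ = a • H X + b • H Y := by rw [hb']; simp [smul_eq_mul]

variable {N : ℕ} [NeZero N]

lemma layered_Bb {s : Ω → Fin N} (hs : Measurable s) (v : Fin N → ℝ) :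
    (fun ω => v (s ω)) ∈ Bb Ω := by
  refine ⟨(Measurable.of_discrete (f := v)).comp hs, ∑ t, |v t|, fun ω => ?_⟩
  exact Finset.single_le_sum (f := fun t => |v t|) (fun t _ => abs_nonneg _)
    (Finset.mem_univ (s ω))

lemma preimage_finset_measure {s : Ω → Fin N} (hs : Measurable s)
    (hunif : ∀ t, P (s ⁻¹' {t}) = (N : ℝ≥0∞)⁻¹) (T : Finset (Fin N)) :
    P (s ⁻¹' (T : Set (Fin N))) = T.card * (N : ℝ≥0∞)⁻¹ := by
  have h1 : s ⁻¹' (T : Set (Fin N)) = ⋃ t ∈ T, s ⁻¹' {t} := by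
    ext ω; simp
  rw [h1, measure_biUnion_finset ?_ (fun t _ => hs (measurableSet_singleton t))]
  · simp only [hunif]
    rw [Finset.sum_const, nsmul_eq_mul]
  · intro t₁ _ t₂ _ hne
    exact Set.disjoint_left.mpr fun ω h1 h2 => hne (by
      simp only [Set.mem_preimage, Set.mem_singleton_iff] at h1 h2
      rw [← h1, ← h2])

lemma shifted_map_eq {s : Ω → Fin N} (hs : Measurable s)
    (hunif : ∀ t, P (s ⁻¹' {t}) = (N : ℝ≥0∞)⁻¹) (v : Fin N → ℝ) (j : Fin N) :
    P.map (fun ω => v (s ω + j)) = P.map (fun ω => v (s ω)) := by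
  classical
  have hm1 : Measurable fun ω => v (s ω + j) :=
    (Measurable.of_discrete (f := fun t => v (t + j))).comp hs
  have hm2 : Measurable fun ω => v (s ω) :=
    (Measurable.of_discrete (f := v)).comp hs
  ext A hA
  rw [Measure.map_apply hm1 hA, Measure.map_apply hm2 hA]
  have h1 : (fun ω => v (s ω + j)) ⁻¹' A =
      s ⁻¹' ((Finset.univ.filter (fun t => v (t + j) ∈ A) : Finset (Fin N)) : Set (Fin N)) := by
    ext ω; simp
  have h2 : (fun ω => v (s ω)) ⁻¹' A =
      s ⁻¹' ((Finset.univ.filter (fun t => v t ∈ A) : Finset (Fin N)) : Set (Fin N)) := by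
    ext ω; simp
  rw [h1, h2, preimage_finset_measure hs hunif, preimage_finset_measure hs hunif]
  congr 1
  norm_cast
  apply Finset.card_bij (fun t _ => t + j)
  · intro t ht
    simp only [Finset.mem_filter, Finset.mem_univ, true_and] at ht ⊢
    exact ht
  · intro t₁ h₁ t₂ h₂ h
    exact add_right_cancel h
  · intro t ht
    simp only [Finset.mem_filter, Finset.mem_univ, true_and] at ht ⊢
    exact ⟨t - j, by simp [ht], by simp⟩

lemma layered_good {H : (Ω → ℝ) → ℝ} (hH : IsPremium (Bb Ω) H)
    (hconv : IsConvexOn (Bb Ω) H)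
    (hlaw : ∀ X ∈ Bb Ω, ∀ Y ∈ Bb Ω, P.map X = P.map Y → H X = H Y)
    {s : Ω → Fin N} (hs : Measurable s)
    (hunif : ∀ t, P (s ⁻¹' {t}) = (N : ℝ≥0∞)⁻¹) (v : Fin N → ℝ) :
    (∑ t, v t) / N ≤ H (fun ω => v (s ω)) := by
  classical
  set Y : Fin N → Ω → ℝ := fun j => fun ω => v (s ω + j) with hY
  have hYb : ∀ j, Y j ∈ Bb Ω := fun j => layered_Bb hs (fun t => v (t + j))
  have hYH : ∀ j, H (Y j) = H (fun ω => v (s ω)) := fun j =>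
    hlaw _ (hYb j) _ (layered_Bb hs v) (shifted_map_eq hs hunif v j)
  have hsum : (∑ j : Fin N, (N : ℝ)⁻¹ • Y j) = fun _ => (∑ t, v t) / N := by
    funext ω
    rw [Finset.sum_apply]
    have : ∑ j : Fin N, ((N : ℝ)⁻¹ • Y j) ω = (N : ℝ)⁻¹ * ∑ j : Fin N, v (s ω + j) := by
      rw [Finset.mul_sum]
      rfl
    rw [this]
    have hre : ∑ j : Fin N, v (s ω + j) = ∑ t, v t :=
      Fintype.sum_equiv (Equiv.addLeft (s ω)) _ _ (fun j => rfl)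
    rw [hre, div_eq_inv_mul]
  have hNpos : (0 : ℝ) < N := by
    have := Nat.pos_of_ne_zero (NeZero.ne N)
    exact_mod_cast this
  have hjensen := (convexOn_H hconv).map_sum_le (t := Finset.univ)
    (w := fun _ : Fin N => (N : ℝ)⁻¹) (p := Y)
    (fun _ _ => by positivity)
    (by
      rw [Finset.sum_const, Finset.card_univ, Fintype.card_fin, nsmul_eq_mul]
      field_simp)
    (fun j _ => hYb j)
  rw [hsum] at hjensen
  rw [H_const hH] at hjensen
  calc (∑ t, v t) / N ≤ ∑ j : Fin N, (N : ℝ)⁻¹ * H (Y j) := hjensen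
  _ = ∑ j : Fin N, (N : ℝ)⁻¹ * H (fun ω => v (s ω)) := by simp [hYH]
  _ = H (fun ω => v (s ω)) := by
    rw [Finset.sum_const, Finset.card_univ, Fintype.card_fin, nsmul_eq_mul]
    field_simp

lemma layered_integral {s : Ω → Fin N} (hs : Measurable s)
    (hunif : ∀ t, P (s ⁻¹' {t}) = (N : ℝ≥0∞)⁻¹) (v : Fin N → ℝ) :
    ∫ ω, v (s ω) ∂P = (∑ t, v t) / N := by
  classical
  have heq : (fun ω => v (s ω)) =
      fun ω => ∑ t : Fin N, Set.indicator (s ⁻¹' {t}) (fun _ => v t) ω := by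
    funext ω
    rw [Finset.sum_eq_single (s ω)]
    · simp [Set.indicator_apply]
    · intro t _ hne
      simp [Set.indicator_apply, hne.symm]
    · simp
  rw [heq]
  rw [integral_finset_sum _ (fun t _ => ?_)]
  · have : ∀ t : Fin N, ∫ ω, Set.indicator (s ⁻¹' {t}) (fun _ => v t) ω ∂P
        = v t * (N : ℝ)⁻¹ := by
      intro t
      rw [integral_indicator_const _ (hs (measurableSet_singleton t)), measureReal_def, hunif t]
      rw [smul_eq_mul, mul_comm]
      congr 1
      rw [ENNReal.toReal_inv]
      simp
    simp only [this]
    rw [← Finset.sum_mul, div_eq_mul_inv]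
  · exact (integrable_indicator_iff (hs (measurableSet_singleton t))).mpr
      (integrableOn_const (measure_ne_top P _))

end LemB

section Qtl
variable {Ω : Type*} [MeasurableSpace Ω] (P : Measure Ω) [IsProbabilityMeasure P]
variable (X : Ω → ℝ) (c : ℝ)

/-- lower quantile function, truncated below at `-c` -/
noncomputable def qtl (u : ℝ≥0∞) : ℝ :=
  sInf ({x | u ≤ P {ω | X ω ≤ x}} ∩ Ici (-c))

variable {P X c}
variable (hXm : Measurable X) (hc : ∀ ω, |X ω| ≤ c) (hc0 : 0 ≤ c)

lemma qtl_set_bddBelow (u : ℝ≥0∞) :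
    BddBelow ({x | u ≤ P {ω | X ω ≤ x}} ∩ Ici (-c)) :=
  ⟨-c, fun x hx => hx.2⟩

include hc in
lemma measure_le_top_eq_one : P {ω | X ω ≤ c} = 1 := by
  have : {ω | X ω ≤ c} = univ := eq_univ_of_forall fun ω => (abs_le.mp (hc ω)).2
  rw [this, measure_univ]

include hc hc0 in
lemma qtl_set_nonempty {u : ℝ≥0∞} (hu : u ≤ 1) :
    ({x | u ≤ P {ω | X ω ≤ x}} ∩ Ici (-c)).Nonempty :=
  ⟨c, by rw [Set.mem_inter_iff]; exact ⟨by rw [Set.mem_setOf_eq, measure_le_top_eq_one hc]; exact hu,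
    by simp only [Set.mem_Ici]; linarith⟩⟩

include hc hc0 in
lemma qtl_le_c {u : ℝ≥0∞} (hu : u ≤ 1) : qtl P X c u ≤ c :=
  csInf_le (qtl_set_bddBelow u) (by
    rw [Set.mem_inter_iff]
    exact ⟨by rw [Set.mem_setOf_eq, measure_le_top_eq_one hc]; exact hu,
      by simp only [Set.mem_Ici]; linarith⟩)

include hc hc0 in
lemma neg_c_le_qtl {u : ℝ≥0∞} (hu : u ≤ 1) : -c ≤ qtl P X c u :=
  le_csInf (qtl_set_nonempty hc hc0 hu) fun x hx => hx.2

include hc hc0 in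
lemma qtl_mono {u u' : ℝ≥0∞} (h : u ≤ u') (hu' : u' ≤ 1) : qtl P X c u ≤ qtl P X c u' := by
  apply csInf_le_csInf (qtl_set_bddBelow u) (qtl_set_nonempty hc hc0 hu')
  intro x hx
  exact ⟨le_trans h hx.1, hx.2⟩

include hc hc0 in
lemma qtl_zero : qtl P X c 0 = -c := by
  apply le_antisymm
  · apply csInf_le (qtl_set_bddBelow 0)
    exact ⟨by simp, Set.mem_Ici.mpr le_rfl⟩
  · exact neg_c_le_qtl hc hc0 zero_le_one

include hXm hc hc0 in
lemma le_F_qtl {u : ℝ≥0∞} (hu : u ≤ 1) : u ≤ P {ω | X ω ≤ qtl P X c u} := by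
  set q := qtl P X c u with hq
  have key : ∀ n : ℕ, u ≤ P {ω | X ω ≤ q + 1 / (n + 1)} := by
    intro n
    have hpos : (0 : ℝ) < 1 / (n + 1) := by positivity
    obtain ⟨x, hx, hlt⟩ := exists_lt_of_csInf_lt
      ((qtl_set_nonempty hc hc0 hu)) (show q < q + 1/(n+1) by linarith)
    calc u ≤ P {ω | X ω ≤ x} := hx.1
    _ ≤ P {ω | X ω ≤ q + 1 / (n + 1)} := measure_mono fun ω h => le_trans h hlt.le
  have hint : ⋂ n : ℕ, {ω | X ω ≤ q + 1 / (n + 1)} = {ω | X ω ≤ q} := by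
    ext ω
    simp only [Set.mem_iInter, Set.mem_setOf_eq]
    constructor
    · intro h
      refine le_of_forall_pos_le_add fun ε hε => ?_
      obtain ⟨n, hn⟩ := exists_nat_one_div_lt hε
      exact (h n).trans (by linarith)
    · intro h n
      have : (0:ℝ) < 1 / (n+1) := by positivity
      linarith
  have hanti : Antitone (fun n : ℕ => {ω | X ω ≤ q + 1 / (n + 1)}) := by
    intro n m hnm ω h
    simp only [Set.mem_setOf_eq] at *
    have h1 : (1:ℝ) / (m + 1) ≤ 1 / (n + 1) := by
      apply one_div_le_one_div_of_le (by positivity)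
      exact_mod_cast add_le_add_left (Nat.cast_le.mpr hnm) 1
    linarith
  have htend := MeasureTheory.tendsto_measure_iInter_atTop
    (fun n => (hXm measurableSet_Iic).nullMeasurableSet) hanti ⟨0, measure_ne_top P _⟩
  exact le_trans (ge_of_tendsto' htend key) (le_of_eq (congrArg P hint))

end Qtl

section Qtl2
variable {Ω : Type*} [MeasurableSpace Ω] {P : Measure Ω} [IsProbabilityMeasure P]
variable {X : Ω → ℝ} {c : ℝ}
variable (hXm : Measurable X) (hc : ∀ ω, |X ω| ≤ c) (hc0 : 0 ≤ c)

include hXm hc hc0 in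
lemma F_lt_qtl_le {u : ℝ≥0∞} : P {ω | X ω < qtl P X c u} ≤ u := by
  set q := qtl P X c u with hq
  have hunion : {ω | X ω < q} = ⋃ n : ℕ, {ω | X ω ≤ q - 1 / (n + 1)} := by
    ext ω
    simp only [Set.mem_setOf_eq, Set.mem_iUnion]
    constructor
    · intro h
      obtain ⟨n, hn⟩ := exists_nat_one_div_lt (show (0:ℝ) < q - X ω by linarith)
      exact ⟨n, by linarith⟩
    · rintro ⟨n, hn⟩
      have : (0:ℝ) < 1 / (n + 1) := by positivity
      linarith
  have hkey : ∀ n : ℕ, P {ω | X ω ≤ q - 1 / (n + 1)} ≤ u := by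
    intro n
    have hpos : (0 : ℝ) < 1 / (n + 1) := by positivity
    rcases lt_or_ge (q - 1 / (n + 1)) (-c) with hlt | hge
    · have : {ω | X ω ≤ q - 1 / (n + 1)} = ∅ := by
        apply Set.eq_empty_of_forall_notMem
        intro ω hω
        simp only [Set.mem_setOf_eq] at hω
        have := (abs_le.mp (hc ω)).1
        linarith
      rw [this, measure_empty]
      exact zero_le
    · by_contra hcon
      push_neg at hcon
      have hmem : q - 1 / (n + 1) ∈ ({x | u ≤ P {ω | X ω ≤ x}} ∩ Ici (-c)) :=
        ⟨hcon.le, hge⟩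
      have h2 : q ≤ q - 1 / (n + 1) := csInf_le (qtl_set_bddBelow _) hmem
      linarith
  have hmono : Monotone (fun n : ℕ => {ω | X ω ≤ q - 1 / (n + 1)}) := by
    intro n m hnm ω h
    simp only [Set.mem_setOf_eq] at *
    have h1 : (1:ℝ) / (m + 1) ≤ 1 / (n + 1) := by
      apply one_div_le_one_div_of_le (by positivity)
      exact_mod_cast add_le_add_left (Nat.cast_le.mpr hnm) 1
    linarith
  calc P {ω | X ω < q} = P (⋃ n : ℕ, {ω | X ω ≤ q - 1 / (n + 1)}) := by rw [hunion]
  _ = ⨆ n : ℕ, P {ω | X ω ≤ q - 1 / ((n : ℝ) + 1)} := hmono.measure_iUnion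
  _ ≤ u := iSup_le hkey

end Qtl2

section UU
noncomputable def uu (k j : ℕ) : ℝ≥0∞ := (j : ℝ≥0∞) * ((2 : ℝ≥0∞) ^ k)⁻¹

lemma two_pow_ne_zero' (k : ℕ) : ((2 : ℝ≥0∞) ^ k) ≠ 0 := by positivity

lemma two_pow_ne_top' (k : ℕ) : ((2 : ℝ≥0∞) ^ k) ≠ ⊤ :=
  ENNReal.pow_ne_top ENNReal.ofNat_ne_top

lemma uu_cancel (k : ℕ) : (2 : ℝ≥0∞) ^ k * ((2 : ℝ≥0∞) ^ k)⁻¹ = 1 :=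
  ENNReal.mul_inv_cancel (two_pow_ne_zero' k) (two_pow_ne_top' k)

lemma uu_scale (k j : ℕ) : uu (k + 1) (2 * j) = uu k j := by
  unfold uu
  have hinv : ((2 : ℝ≥0∞) ^ (k + 1))⁻¹ = ((2 : ℝ≥0∞) ^ k)⁻¹ * 2⁻¹ := by
    rw [pow_succ, ENNReal.mul_inv (Or.inl (two_pow_ne_zero' k)) (Or.inl (two_pow_ne_top' k))]
  push_cast
  rw [hinv]
  have h2 : (2 : ℝ≥0∞) * 2⁻¹ = 1 := ENNReal.mul_inv_cancel two_ne_zero ENNReal.ofNat_ne_top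
  calc (2 : ℝ≥0∞) * (j : ℝ≥0∞) * (((2 : ℝ≥0∞) ^ k)⁻¹ * 2⁻¹)
      = ((2 : ℝ≥0∞) * 2⁻¹) * ((j : ℝ≥0∞) * ((2 : ℝ≥0∞) ^ k)⁻¹) := by ring
  _ = (j : ℝ≥0∞) * ((2 : ℝ≥0∞) ^ k)⁻¹ := by rw [h2, one_mul]

lemma uu_mono (k : ℕ) {j j' : ℕ} (h : j ≤ j') : uu k j ≤ uu k j' :=
  mul_le_mul_left (Nat.cast_le.mpr h) _

lemma uu_le_one {k j : ℕ} (h : j ≤ 2 ^ k) : uu k j ≤ 1 := by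
  unfold uu
  calc (j : ℝ≥0∞) * ((2 : ℝ≥0∞) ^ k)⁻¹ ≤ (2 : ℝ≥0∞) ^ k * ((2 : ℝ≥0∞) ^ k)⁻¹ := by
        apply mul_le_mul_left
        calc (j : ℝ≥0∞) ≤ ((2 ^ k : ℕ) : ℝ≥0∞) := Nat.cast_le.mpr h
        _ = (2 : ℝ≥0∞) ^ k := by push_cast; rfl
  _ = 1 := uu_cancel k

lemma uu_zero (k : ℕ) : uu k 0 = 0 := by simp [uu]

end UU

structure IsStage {Ω : Type*} [MeasurableSpace Ω] (P : Measure Ω) (X : Ω → ℝ) (c : ℝ)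
    (k : ℕ) (E : ℕ → Set Ω) : Prop where
  meas : ∀ j, MeasurableSet (E j)
  zero : E 0 = ∅
  top : ∀ j, 2 ^ k ≤ j → E j = Set.univ
  mono : ∀ j, E j ⊆ E (j + 1)
  measval : ∀ j ≤ 2 ^ k, P (E j) = uu k j
  upper : ∀ j < 2 ^ k, E j ⊆ {ω | X ω ≤ qtl P X c (uu k j)}
  lower : ∀ j ≤ 2 ^ k, {ω | X ω < qtl P X c (uu k j)} ⊆ E j

section Stage
variable {Ω : Type*} [MeasurableSpace Ω] {P : Measure Ω} [IsProbabilityMeasure P]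
variable {X : Ω → ℝ} {c : ℝ}
variable (hXm : Measurable X) (hc : ∀ ω, |X ω| ≤ c) (hc0 : 0 ≤ c)

include hXm hc hc0 in
lemma stage_zero : IsStage P X c 0 (fun j => if j = 0 then (∅ : Set Ω) else Set.univ) := by
  constructor
  · intro j; by_cases h : j = 0 <;> simp [h]
  · simp
  · intro j hj
    have : j ≠ 0 := by omega
    simp [this]
  · intro j
    by_cases h : j = 0 <;> simp [h]
  · intro j hj
    interval_cases j
    · simp [uu_zero]
    · simp only [one_ne_zero, if_false]
      rw [measure_univ]
      have : uu 0 1 = 1 := by simp [uu]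
      rw [this]
  · intro j hj
    interval_cases j
    simp
  · intro j hj
    interval_cases j
    · simp only [if_pos rfl]
      rw [uu_zero, qtl_zero hc hc0]
      intro ω hω
      simp only [Set.mem_setOf_eq] at hω
      have := (abs_le.mp (hc ω)).1
      linarith
    · simp

include hXm hc hc0 in
lemma stage_step (hat : Atomless P) {k : ℕ} {E : ℕ → Set Ω} (hE : IsStage P X c k E) :
    ∃ E' : ℕ → Set Ω, IsStage P X c (k + 1) E' ∧ ∀ j, E' (2 * j) = E j := by
  classical
  have hpow : (1 : ℕ) ≤ 2 ^ k := Nat.one_le_two_pow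
  -- feasibility at odd indices
  have hodd : ∀ i : ℕ, 2 * i + 1 < 2 ^ (k + 1) → ∃ C, MeasurableSet C ∧
      (E i ∪ {ω | X ω < qtl P X c (uu (k + 1) (2 * i + 1))}) ⊆ C ∧
      C ⊆ ({ω | X ω ≤ qtl P X c (uu (k + 1) (2 * i + 1))} ∩ E (i + 1)) ∧
      P C = uu (k + 1) (2 * i + 1) := by
    intro i hi
    have hik : i < 2 ^ k := by
      have : 2 ^ (k + 1) = 2 * 2 ^ k := by ring
      omega
    set t := uu (k + 1) (2 * i + 1) with ht
    set q' := qtl P X c t with hq'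
    set qi := qtl P X c (uu k i) with hqi
    set qi1 := qtl P X c (uu k (i + 1)) with hqi1
    have ht1 : t ≤ 1 := uu_le_one (by omega)
    have hui : uu k i ≤ t := by
      rw [ht, ← uu_scale k i]; exact uu_mono _ (by omega)
    have hui1 : t ≤ uu k (i + 1) := by
      rw [ht, ← uu_scale k (i + 1)]; exact uu_mono _ (by omega)
    have hqle : qi ≤ q' := qtl_mono hc hc0 hui ht1
    have hqle1 : q' ≤ qi1 := qtl_mono hc hc0 hui1 (uu_le_one (by omega))
    set L := E i ∪ {ω | X ω < q'} with hL
    set U := {ω | X ω ≤ q'} ∩ E (i + 1) with hU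
    have hLm : MeasurableSet L := (hE.meas i).union (hXm measurableSet_Iio)
    have hUm : MeasurableSet U := (hXm measurableSet_Iic).inter (hE.meas (i + 1))
    have hLU : L ⊆ U := by
      apply Set.union_subset
      · apply Set.subset_inter
        · exact (hE.upper i hik).trans fun ω h => le_trans h hqle
        · exact hE.mono i
      · apply Set.subset_inter
        · intro ω h
          simp only [Set.mem_setOf_eq] at *
          exact le_of_lt h
        · exact (fun ω (h : X ω < q') => (hE.lower (i + 1) (by omega))
            (show X ω < qi1 from lt_of_lt_of_le h hqle1))
    have hPL : P L ≤ t := by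
      rcases eq_or_lt_of_le hqle with heq | hlt
      · have h1 : {ω | X ω < q'} ⊆ E i := by
          rw [← heq]
          exact hE.lower i (by omega)
        have h2 : L ⊆ E i := Set.union_subset subset_rfl h1
        calc P L ≤ P (E i) := measure_mono h2
        _ = uu k i := hE.measval i (by omega)
        _ ≤ t := hui
      · have h1 : E i ⊆ {ω | X ω < q'} :=
          (hE.upper i hik).trans fun ω h => lt_of_le_of_lt h hlt
        have h2 : L ⊆ {ω | X ω < q'} := Set.union_subset h1 subset_rfl
        calc P L ≤ P {ω | X ω < q'} := measure_mono h2
        _ ≤ t := F_lt_qtl_le hXm hc hc0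
    have hPU : t ≤ P U := by
      rcases eq_or_lt_of_le (show i + 1 ≤ 2 ^ k by omega) with heqk | hltk
      · have h1 : E (i + 1) = Set.univ := hE.top (i + 1) (by omega)
        have h2 : U = {ω | X ω ≤ q'} := by rw [hU, h1, Set.inter_univ]
        rw [h2]
        exact le_F_qtl hXm hc hc0 ht1
      · rcases eq_or_lt_of_le hqle1 with heq | hlt
        · have h1 : E (i + 1) ⊆ {ω | X ω ≤ q'} := by
            rw [heq]
            exact hE.upper (i + 1) hltk
          have h2 : U = E (i + 1) := Set.inter_eq_self_of_subset_right h1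
          rw [h2, hE.measval (i + 1) (by omega)]
          exact hui1
        · have h1 : {ω | X ω ≤ q'} ⊆ E (i + 1) :=
            (fun ω (h : X ω ≤ q') => (hE.lower (i + 1) (by omega))
              (show X ω < qi1 from lt_of_le_of_lt h hlt))
          have h2 : U = {ω | X ω ≤ q'} := Set.inter_eq_self_of_subset_left h1
          rw [h2]
          exact le_F_qtl hXm hc hc0 ht1
    exact atomless_exists_between hat hLm hUm hLU hPL hPU
  choose Cf hC1 hC2 hC3 hC4 using hodd
  set g : ℕ → Set Ω := fun i => if h : 2 * i + 1 < 2 ^ (k + 1) then Cf i h else Set.univ with hg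
  set E' : ℕ → Set Ω := fun j => if j % 2 = 0 then E (j / 2) else g (j / 2) with hE'
  have hgm_pos : ∀ m (h : 2 * m + 1 < 2 ^ (k + 1)), g m = Cf m h := fun m h => dif_pos h
  have hgm_neg : ∀ m, ¬(2 * m + 1 < 2 ^ (k + 1)) → g m = Set.univ := fun m h => dif_neg h
  have hE'even : ∀ m, E' (2 * m) = E m := by
    intro m
    have h1 : (2 * m) % 2 = 0 := by omega
    have h2 : 2 * m / 2 = m := by omega
    simp only [hE', h1, h2, if_true]
  have hE'odd : ∀ m, E' (2 * m + 1) = g m := by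
    intro m
    have h1 : (2 * m + 1) % 2 = 1 := by omega
    have h2 : (2 * m + 1) / 2 = m := by omega
    simp only [hE', h1, h2]
    norm_num
  have hpow1 : 2 ^ (k + 1) = 2 * 2 ^ k := by ring
  refine ⟨E', ?_, hE'even⟩
  constructor
  · -- meas
    intro j
    rcases Nat.even_or_odd' j with ⟨m, rfl | rfl⟩
    · rw [hE'even]; exact hE.meas m
    · rw [hE'odd]
      rcases lt_or_ge (2 * m + 1) (2 ^ (k + 1)) with h | h
      · rw [hgm_pos m h]; exact hC1 _ _
      · rw [hgm_neg m (by omega)]; exact MeasurableSet.univ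
  · -- zero
    have : (0 : ℕ) = 2 * 0 := rfl
    rw [this, hE'even]; exact hE.zero
  · -- top
    intro j hj
    rcases Nat.even_or_odd' j with ⟨m, rfl | rfl⟩
    · rw [hE'even]; exact hE.top m (by omega)
    · rw [hE'odd]
      exact hgm_neg m (by omega)
  · -- mono
    intro j
    rcases Nat.even_or_odd' j with ⟨m, rfl | rfl⟩
    · have h1 : 2 * m + 1 = 2 * m + 1 := rfl
      rw [hE'even, hE'odd]
      rcases lt_or_ge (2 * m + 1) (2 ^ (k + 1)) with h | h
      · rw [hgm_pos m h]
        exact (Set.subset_union_left).trans (hC2 m h)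
      · rw [hgm_neg m (by omega)]
        exact Set.subset_univ _
    · have h1 : 2 * m + 1 + 1 = 2 * (m + 1) := by ring
      rw [hE'odd, h1, hE'even]
      rcases lt_or_ge (2 * m + 1) (2 ^ (k + 1)) with h | h
      · rw [hgm_pos m h]
        exact (hC3 m h).trans Set.inter_subset_right
      · rw [hgm_neg m (by omega), hE.top (m + 1) (by omega)]
  · -- measval
    intro j hj
    rcases Nat.even_or_odd' j with ⟨m, rfl | rfl⟩
    · rw [hE'even, uu_scale, hE.measval m (by omega)]
    · have hlt : 2 * m + 1 < 2 ^ (k + 1) := by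
        rcases eq_or_lt_of_le hj with heq | hlt
        · exfalso; omega
        · exact hlt
      rw [hE'odd, hgm_pos m hlt]
      exact hC4 m hlt
  · -- upper
    intro j hj
    rcases Nat.even_or_odd' j with ⟨m, rfl | rfl⟩
    · rw [hE'even, uu_scale]
      exact hE.upper m (by omega)
    · rw [hE'odd, hgm_pos m hj]
      exact (hC3 m hj).trans Set.inter_subset_left
  · -- lower
    intro j hj
    rcases Nat.even_or_odd' j with ⟨m, rfl | rfl⟩
    · rw [hE'even, uu_scale]
      exact hE.lower m (by omega)
    · have hlt : 2 * m + 1 < 2 ^ (k + 1) := by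
        rcases eq_or_lt_of_le hj with heq | hlt
        · exfalso; omega
        · exact hlt
      rw [hE'odd, hgm_pos m hlt]
      exact (Set.subset_union_right).trans (hC2 m hlt)

end Stage

section ApproxSeq
variable {Ω : Type*} [MeasurableSpace Ω] {P : Measure Ω} [IsProbabilityMeasure P]
variable {X : Ω → ℝ} {c : ℝ}

lemma exists_stages (hat : Atomless P) (hXm : Measurable X) (hc : ∀ ω, |X ω| ≤ c)
    (hc0 : 0 ≤ c) :
    ∃ Es : ℕ → ℕ → Set Ω, (∀ k, IsStage P X c k (Es k)) ∧
      ∀ k j, Es (k + 1) (2 * j) = Es k j := by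
  have h0 := stage_zero hXm hc hc0 (P := P)
  have hstep : ∀ k (E : ℕ → Set Ω), IsStage P X c k E →
      ∃ E', IsStage P X c (k + 1) E' ∧ ∀ j, E' (2 * j) = E j :=
    fun k E hE => stage_step hXm hc hc0 hat hE
  choose stepf h1 h2 using hstep
  set seq : (k : ℕ) → {E : ℕ → Set Ω // IsStage P X c k E} :=
    fun k => Nat.rec ⟨_, h0⟩ (fun k p => ⟨stepf k p.1 p.2, h1 k p.1 p.2⟩) k with hseq
  exact ⟨fun k => (seq k).1, fun k => (seq k).2, fun k j => h2 k (seq k).1 (seq k).2 j⟩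

-- subset monotonicity along indices
lemma stage_subset {k : ℕ} {E : ℕ → Set Ω} (hE : IsStage P X c k E)
    {a b : ℕ} (hab : a ≤ b) : E a ⊆ E b := by
  induction b with
  | zero => rw [Nat.le_zero.mp hab]
  | succ b ih =>
    rcases Nat.lt_or_ge a (b + 1) with h | h
    · exact (ih (by omega)).trans (hE.mono b)
    · have : a = b + 1 := by omega
      rw [this]

end ApproxSeq

section Main
variable {Ω : Type*} [MeasurableSpace Ω] {P : Measure Ω} [IsProbabilityMeasure P]
variable {X : Ω → ℝ} {c : ℝ}

lemma Bb.integrable {Z : Ω → ℝ} (hZ : Z ∈ Bb Ω) : Integrable Z P := by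
  obtain ⟨hm, b, hb⟩ := hZ
  exact (integrable_const b).mono' hm.aestronglyMeasurable (ae_of_all _ (by simpa using hb))

lemma exists_approx_seq (hat : Atomless P) (hXm : Measurable X) (hc : ∀ ω, |X ω| ≤ c)
    (hc0 : 0 ≤ c)
    {H : (Ω → ℝ) → ℝ} (hH : IsPremium (Bb Ω) H) (hconv : IsConvexOn (Bb Ω) H)
    (hlaw : ∀ X ∈ Bb Ω, ∀ Y ∈ Bb Ω, P.map X = P.map Y → H X = H Y) :
    ∃ Y : ℕ → Ω → ℝ, (∀ k, Y k ∈ Bb Ω) ∧ (∀ k ω, X ω ≤ Y k ω) ∧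
      (∀ k ω, Y (k + 1) ω ≤ Y k ω) ∧ (∀ ω, (⨅ k, Y k ω) = X ω) ∧
      (∀ k, (∫ ω, X ω ∂P) ≤ H (Y k)) := by
  classical
  obtain ⟨Es, hEs, hcompat⟩ := exists_stages hat hXm hc hc0
  have hpow : ∀ k : ℕ, 1 ≤ 2 ^ k := fun k => Nat.one_le_two_pow
  have hex : ∀ k ω, ∃ j, ω ∈ Es k (j + 1) := by
    intro k ω
    refine ⟨2 ^ k - 1, ?_⟩
    rw [(hEs k).top (2 ^ k - 1 + 1) (by have := hpow k; omega)]
    trivial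
  set idx : ℕ → Ω → ℕ := fun k ω => Nat.find (hex k ω) with hidx
  have hidx_lt : ∀ k ω, idx k ω < 2 ^ k := by
    intro k ω
    have h1 : idx k ω ≤ 2 ^ k - 1 := Nat.find_le (by
      rw [(hEs k).top (2 ^ k - 1 + 1) (by have := hpow k; omega)]; trivial)
    have := hpow k
    omega
  have hidx_mem : ∀ k ω, ω ∈ Es k (idx k ω + 1) := fun k ω => Nat.find_spec (hex k ω)
  have hidx_not : ∀ k ω, ω ∉ Es k (idx k ω) := by
    intro k ω hmem
    rcases Nat.eq_zero_or_pos (idx k ω) with h0 | hpos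
    · rw [h0, (hEs k).zero] at hmem
      exact hmem
    · have := Nat.find_min (hex k ω) (show idx k ω - 1 < idx k ω by omega)
      apply this
      have : idx k ω - 1 + 1 = idx k ω := by omega
      rw [this]
      exact hmem
  have hidx_meas : ∀ k, Measurable (idx k) := by
    intro k
    exact measurable_find (hex k) (fun j => (hEs k).meas (j + 1))
  -- the values
  set v : ℕ → ℕ → ℝ := fun k j => if j < 2 ^ k then qtl P X c (uu k j) else c with hv
  have hv_le_c : ∀ k j, v k j ≤ c := by
    intro k j
    simp only [hv]
    split
    · exact qtl_le_c hc hc0 (uu_le_one (by omega))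
    · exact le_rfl
  have hv_lb : ∀ k j, -c ≤ v k j := by
    intro k j
    simp only [hv]
    split
    · exact neg_c_le_qtl hc hc0 (uu_le_one (by omega))
    · linarith
  have hv_zero : ∀ k, v k 0 = -c := by
    intro k
    simp only [hv]
    rw [if_pos (by have := hpow k; omega), uu_zero, qtl_zero hc hc0]
  have hv_top : ∀ k, v k (2 ^ k) = c := by
    intro k
    simp only [hv]
    rw [if_neg (by omega)]
  set Y : ℕ → Ω → ℝ := fun k ω => v k (idx k ω + 1) with hY
  -- basic pointwise properties
  have hXleY : ∀ k ω, X ω ≤ Y k ω := by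
    intro k ω
    have hmem := hidx_mem k ω
    simp only [hY, hv]
    split
    · rename_i h
      exact (hEs k).upper (idx k ω + 1) h hmem
    · exact (abs_le.mp (hc ω)).2
  have hvidx_leX : ∀ k ω, v k (idx k ω) ≤ X ω := by
    intro k ω
    have hnot := hidx_not k ω
    simp only [hv]
    rw [if_pos (hidx_lt k ω)]
    by_contra hcon
    push_neg at hcon
    exact hnot ((hEs k).lower (idx k ω) (by have := hidx_lt k ω; omega) hcon)
  -- antitone in k
  have hanti : ∀ k ω, Y (k + 1) ω ≤ Y k ω := by
    intro k ω
    set m := idx k ω with hm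
    set m' := idx (k + 1) ω with hm'
    have hmem : ω ∈ Es (k + 1) (2 * m + 1 + 1) := by
      have h1 : 2 * m + 1 + 1 = 2 * (m + 1) := by ring
      rw [h1, hcompat k (m + 1)]
      exact hidx_mem k ω
    have hle : m' ≤ 2 * m + 1 := Nat.find_le hmem
    simp only [hY]
    rcases Nat.lt_or_ge (m + 1) (2 ^ k) with hcase | hcase
    · have hv1 : v k (m + 1) = qtl P X c (uu k (m + 1)) := by
        simp only [hv]; rw [if_pos hcase]
      have h2 : m' + 1 < 2 ^ (k + 1) := by
        have : 2 ^ (k + 1) = 2 * 2 ^ k := by ring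
        omega
      have hv2 : v (k + 1) (m' + 1) = qtl P X c (uu (k + 1) (m' + 1)) := by
        simp only [hv]; rw [if_pos h2]
      rw [hv1, hv2]
      have huu : uu (k + 1) (m' + 1) ≤ uu k (m + 1) := by
        rw [← uu_scale k (m + 1)]
        exact uu_mono _ (by omega)
      exact qtl_mono hc hc0 huu (uu_le_one hcase.le)
    · have hv1 : v k (m + 1) = c := by
        simp only [hv]; rw [if_neg (by omega)]
      rw [hv1]
      exact hv_le_c _ _
  -- per-k layered structure
  have hNeZero : ∀ k, NeZero (2 ^ k) := fun k => ⟨by have := hpow k; omega⟩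
  have perk : ∀ k, Y k ∈ Bb Ω ∧ (∫ ω, Y k ω ∂P) ≤ H (Y k) ∧
      (∫ ω, (Y k ω - X ω) ∂P) ≤ 2 * c * ((2 : ℝ) ^ k)⁻¹ := by
    intro k
    haveI := hNeZero k
    set N := 2 ^ k with hN
    set s : Ω → Fin N := fun ω => ⟨idx k ω, hidx_lt k ω⟩ with hs
    have hsm : Measurable s := by
      have hgm : Measurable (fun n : ℕ => if h : n < N then (⟨n, h⟩ : Fin N)
          else ⟨0, by have := hpow k; omega⟩) := measurable_from_nat
      have : s = (fun n : ℕ => if h : n < N then (⟨n, h⟩ : Fin N)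
          else ⟨0, by have := hpow k; omega⟩) ∘ (idx k) := by
        funext ω
        simp only [Function.comp_apply, hs]
        rw [dif_pos (hidx_lt k ω)]
      rw [this]
      exact hgm.comp (hidx_meas k)
    have hsingle : ∀ t : Fin N, s ⁻¹' {t} = Es k (t.1 + 1) \ Es k t.1 := by
      intro t
      ext ω
      simp only [Set.mem_preimage, Set.mem_singleton_iff, Set.mem_diff, hs, Fin.ext_iff]
      constructor
      · intro h
        rw [← h]
        exact ⟨hidx_mem k ω, hidx_not k ω⟩
      · rintro ⟨h1, h2⟩
        have hle : idx k ω ≤ t.1 := Nat.find_le h1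
        rcases Nat.lt_or_ge (idx k ω) t.1 with hlt | hge
        · exfalso
          exact h2 (stage_subset (hEs k) (by omega) (hidx_mem k ω))
        · omega
    have hunif : ∀ t : Fin N, P (s ⁻¹' {t}) = ((N : ℕ) : ℝ≥0∞)⁻¹ := by
      intro t
      rw [hsingle t]
      have hsub : Es k t.1 ⊆ Es k (t.1 + 1) := (hEs k).mono t.1
      have ht1 : t.1 + 1 ≤ 2 ^ k := t.2
      rw [measure_diff hsub ((hEs k).meas t.1).nullMeasurableSet (measure_ne_top P _),
        (hEs k).measval (t.1 + 1) ht1, (hEs k).measval t.1 (by omega)]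
      have hx_ne_top : ((2 : ℝ≥0∞) ^ k)⁻¹ ≠ ⊤ := ENNReal.inv_ne_top.mpr (two_pow_ne_zero' k)
      have hmul_ne_top : uu k t.1 ≠ ⊤ := by
        unfold uu
        exact ENNReal.mul_ne_top (ENNReal.natCast_ne_top _) hx_ne_top
      have heq : uu k (t.1 + 1) = uu k t.1 + ((2 : ℝ≥0∞) ^ k)⁻¹ := by
        unfold uu
        push_cast
        ring
      rw [heq, ENNReal.add_sub_cancel_left hmul_ne_top]
      have : ((N : ℕ) : ℝ≥0∞) = (2 : ℝ≥0∞) ^ k := by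
        rw [hN]; push_cast; rfl
      rw [this]
    set w : Fin N → ℝ := fun t => v k (t.1 + 1) with hw
    have hYw : Y k = fun ω => w (s ω) := rfl
    have hYBb : Y k ∈ Bb Ω := by rw [hYw]; exact layered_Bb hsm w
    have hint : (∫ ω, Y k ω ∂P) = (∑ t, w t) / N := by
      rw [hYw]
      exact layered_integral hsm hunif w
    have hHY : (∑ t, w t) / N ≤ H (Y k) := by
      rw [hYw]
      exact layered_good hH hconv hlaw hsm hunif w
    refine ⟨hYBb, by rw [hint]; exact hHY, ?_⟩
    -- gap integral
    set w' : Fin N → ℝ := fun t => v k (t.1 + 1) - v k t.1 with hw'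
    have hgap : ∀ ω, Y k ω - X ω ≤ w' (s ω) := by
      intro ω
      have := hvidx_leX k ω
      simp only [hw', hs]
      have hY' : Y k ω = v k (idx k ω + 1) := rfl
      rw [hY']
      linarith
    have hgapint : (∫ ω, w' (s ω) ∂P) = (∑ t, w' t) / N :=
      layered_integral hsm hunif w'
    have hsum : (∑ t, w' t) = 2 * c := by
      rw [hw']
      rw [Fin.sum_univ_eq_sum_range (fun i => v k (i + 1) - v k i) N]
      rw [Finset.sum_range_sub (v k)]
      rw [hN, hv_top, hv_zero]
      ring
    have hgapBb : (fun ω => w' (s ω)) ∈ Bb Ω := layered_Bb hsm w'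
    have hYX_int : Integrable (fun ω => Y k ω - X ω) P :=
      (Bb.integrable hYBb).sub (Bb.integrable ⟨hXm, c, hc⟩)
    calc (∫ ω, (Y k ω - X ω) ∂P) ≤ ∫ ω, w' (s ω) ∂P :=
          integral_mono hYX_int (Bb.integrable hgapBb) hgap
    _ = (∑ t, w' t) / N := hgapint
    _ = 2 * c * ((2 : ℝ) ^ k)⁻¹ := by
        rw [hsum, div_eq_mul_inv, hN]
        push_cast
        ring
  -- a.e. convergence of Y to X
  have hYmeas : ∀ k, Measurable (Y k) := fun k => ((perk k).1).1
  have hYbd : ∀ k ω, |Y k ω| ≤ c := by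
    intro k ω
    rw [abs_le]
    exact ⟨le_trans (neg_le_neg le_rfl) (hv_lb k (idx k ω + 1)), hv_le_c k (idx k ω + 1)⟩
  set D : Ω → ℝ := fun ω => ⨅ k, (Y k ω - X ω) with hD
  have hbddb : ∀ ω, BddBelow (Set.range fun k => Y k ω - X ω) := by
    intro ω
    refine ⟨0, ?_⟩
    rintro y ⟨k, rfl⟩
    exact sub_nonneg.mpr (hXleY k ω)
  have hDnn : ∀ ω, 0 ≤ D ω := fun ω => le_ciInf fun k =>
    sub_nonneg.mpr (hXleY k ω)
  have hDle : ∀ ω k, D ω ≤ Y k ω - X ω := fun ω k => ciInf_le (hbddb ω) k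
  have hDmeas : Measurable D := Measurable.iInf (fun k => (hYmeas k).sub hXm)
  have hDint : Integrable D P := by
    refine Bb.integrable ⟨hDmeas, 2 * c, fun ω => ?_⟩
    rw [abs_le]
    constructor
    · have := hDnn ω; linarith
    · have h1 := hDle ω 0
      have h2 := abs_le.mp (hYbd 0 ω)
      have h3 := abs_le.mp (hc ω)
      linarith
  have hXint : Integrable X P := Bb.integrable ⟨hXm, c, hc⟩
  have hDintle : ∀ k, (∫ ω, D ω ∂P) ≤ 2 * c * ((2 : ℝ) ^ k)⁻¹ := by
    intro k
    have h1 : Integrable (fun ω => Y k ω - X ω) P := (Bb.integrable (perk k).1).sub hXint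
    calc (∫ ω, D ω ∂P) ≤ ∫ ω, (Y k ω - X ω) ∂P :=
          integral_mono hDint h1 (fun ω => hDle ω k)
    _ ≤ 2 * c * ((2 : ℝ) ^ k)⁻¹ := (perk k).2.2
  have hDzero : (∫ ω, D ω ∂P) = 0 := by
    apply le_antisymm
    · have htend : Filter.Tendsto (fun k : ℕ => 2 * c * ((2 : ℝ) ^ k)⁻¹)
          Filter.atTop (nhds 0) := by
        have h1 : Filter.Tendsto (fun k : ℕ => ((2 : ℝ)⁻¹) ^ k) Filter.atTop (nhds 0) :=
          tendsto_pow_atTop_nhds_zero_of_lt_one (by norm_num) (by norm_num)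
        have h2 := h1.const_mul (2 * c)
        rw [mul_zero] at h2
        convert h2 using 2 with k
        rw [inv_pow]
      exact ge_of_tendsto' htend hDintle
    · exact integral_nonneg hDnn
  have hae : ∀ᵐ ω ∂P, D ω = 0 := (integral_eq_zero_iff_of_nonneg hDnn hDint).mp hDzero
  set B : Set Ω := {ω | ¬ D ω = 0} with hB
  have hBmeas : MeasurableSet B := (hDmeas (measurableSet_singleton 0)).compl
  have hPB : P B = 0 := ae_iff.mp hae
  -- final fixed sequence
  set Yh : ℕ → Ω → ℝ := fun k ω => if ω ∈ B then X ω + (2⁻¹ : ℝ) ^ k else Y k ω with hYh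
  have hYhBb : ∀ k, Yh k ∈ Bb Ω := by
    intro k
    constructor
    · exact Measurable.ite hBmeas (hXm.add_const _) (hYmeas k)
    · refine ⟨c + 1, fun ω => ?_⟩
      simp only [hYh]
      split
      · have h1 := abs_le.mp (hc ω)
        have h2 : (0:ℝ) ≤ (2⁻¹ : ℝ) ^ k := by positivity
        have h3 : ((2:ℝ)⁻¹) ^ k ≤ 1 := pow_le_one₀ (by norm_num) (by norm_num)
        rw [abs_le]
        constructor <;> linarith
      · have := abs_le.mp (hYbd k ω)
        rw [abs_le]
        constructor <;> linarith
  have hYhge : ∀ k ω, X ω ≤ Yh k ω := by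
    intro k ω
    simp only [hYh]
    split
    · have : (0:ℝ) ≤ (2⁻¹ : ℝ) ^ k := by positivity
      linarith
    · exact hXleY k ω
  have hYhanti : ∀ k ω, Yh (k + 1) ω ≤ Yh k ω := by
    intro k ω
    simp only [hYh]
    split
    · have : ((2:ℝ)⁻¹) ^ (k+1) ≤ ((2:ℝ)⁻¹) ^ k :=
        pow_le_pow_of_le_one (by norm_num) (by norm_num) (by omega)
      linarith
    · exact hanti k ω
  have hYhinf : ∀ ω, (⨅ k, Yh k ω) = X ω := by
    intro ω
    by_cases hω : ω ∈ B
    · simp only [hYh, if_pos hω]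
      apply le_antisymm
      · apply _root_.le_of_forall_pos_le_add
        intro ε hε
        obtain ⟨k, hk⟩ := exists_pow_lt_of_lt_one hε (show (2⁻¹:ℝ) < 1 by norm_num)
        refine ciInf_le_of_le ⟨X ω, ?_⟩ k (by linarith)
        rintro y ⟨k, rfl⟩
        have : (0:ℝ) ≤ (2⁻¹ : ℝ) ^ k := by positivity
        linarith
      · apply le_ciInf
        intro k
        have : (0:ℝ) ≤ (2⁻¹ : ℝ) ^ k := by positivity
        linarith
    · have hDω : D ω = 0 := by
        by_contra hcon
        exact hω hcon
      simp only [hYh, if_neg hω]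
      apply le_antisymm
      · apply _root_.le_of_forall_pos_le_add
        intro ε hε
        have hlt : (⨅ k, (Y k ω - X ω)) < ε := by
          have : (⨅ k, (Y k ω - X ω)) = D ω := rfl
          rw [this, hDω]
          exact hε
        obtain ⟨k, hk⟩ := exists_lt_of_ciInf_lt hlt
        refine ciInf_le_of_le ⟨X ω, ?_⟩ k (by linarith)
        rintro y ⟨k, rfl⟩
        exact hXleY k ω
      · exact le_ciInf fun k => hXleY k ω
  have hYhH : ∀ k, (∫ ω, X ω ∂P) ≤ H (Yh k) := by
    intro k
    have haeq : ∀ᵐ ω ∂P, Yh k ω = Y k ω := by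
      rw [ae_iff]
      refine measure_mono_null ?_ hPB
      intro ω hω
      simp only [Set.mem_setOf_eq] at hω ⊢
      intro hωB
      apply hω
      have hnotB : ω ∉ B := fun hmem => hmem hωB
      simp only [hYh, if_neg hnotB]
    have hmapeq : P.map (Yh k) = P.map (Y k) := Measure.map_congr haeq
    have hHeq : H (Yh k) = H (Y k) := hlaw _ (hYhBb k) _ (perk k).1 hmapeq
    rw [hHeq]
    calc (∫ ω, X ω ∂P) ≤ ∫ ω, Y k ω ∂P :=
          integral_mono hXint (Bb.integrable (perk k).1) (fun ω => hXleY k ω)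
    _ ≤ H (Y k) := (perk k).2.1
  exact ⟨Yh, hYhBb, hYhge, hYhanti, hYhinf, hYhH⟩

end Main

end Development

/-- on an atomless probability space, a convex, law-invariant
premium principle on `B_b` that is continuous from above carries a safety
loading: `H(X) ≥ E_P(X)` for all `X ∈ B_b`. -/
theorem law_invariant_safety_loading {Ω : Type*} [MeasurableSpace Ω]
    (P : Measure Ω) [IsProbabilityMeasure P]
    (hatomless : ∀ A : Set Ω, MeasurableSet A → 0 < P A →
      ∃ B : Set Ω, MeasurableSet B ∧ B ⊆ A ∧ 0 < P B ∧ P B < P A)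
    (H : (Ω → ℝ) → ℝ)
    (hH : IsPremium (Bb Ω) H) (hconv : IsConvexOn (Bb Ω) H)
    (hlaw : ∀ X ∈ Bb Ω, ∀ Y ∈ Bb Ω, P.map X = P.map Y → H X = H Y)
    (hcont : ∀ X : ℕ → Ω → ℝ, (∀ n, X n ∈ Bb Ω) →
      (∀ n, ∀ ω, X (n + 1) ω ≤ X n ω) → (∀ ω, (⨅ n, X n ω) = 0) →
      (⨅ n, H (X n)) = 0) :
    ∀ X ∈ Bb Ω, (∫ ω, X ω ∂P) ≤ H X := by
  intro X hX
  obtain ⟨hXm, c', hc'⟩ := hX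
  set c : ℝ := max c' 0 with hcdef
  have hc0 : (0:ℝ) ≤ c := le_max_right _ _
  have hcX : ∀ ω, |X ω| ≤ c := fun ω => (hc' ω).trans (le_max_left _ _)
  have hat : Atomless P := hatomless
  obtain ⟨Y, hYBb, hYge, hYanti, hYinf, hYH⟩ :=
    exists_approx_seq hat hXm hcX hc0 hH hconv hlaw
  set Z : ℕ → Ω → ℝ := fun k ω => Y k ω - X ω with hZ
  have hZb : ∀ k, Z k ∈ Bb Ω := by
    intro k
    obtain ⟨hYm, b, hb⟩ := hYBb k
    refine ⟨hYm.sub hXm, b + c, fun ω => ?_⟩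
    have h1 := abs_le.mp (hb ω)
    have h2 := abs_le.mp (hcX ω)
    rw [abs_le]
    constructor <;> simp only [hZ] <;> linarith
  have hZ0 : ∀ k ω, 0 ≤ Z k ω := fun k ω => sub_nonneg.mpr (hYge k ω)
  have hZdec : ∀ k ω, Z (k + 1) ω ≤ Z k ω := by
    intro k ω
    have := hYanti k ω
    simp only [hZ]
    linarith
  have hZinf : ∀ ω, (⨅ k, Z k ω) = 0 := by
    intro ω
    apply le_antisymm
    · apply _root_.le_of_forall_pos_le_add
      intro ε hε
      have hlt : (⨅ k, Y k ω) < X ω + ε := by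
        rw [hYinf ω]; linarith
      obtain ⟨k, hk⟩ := exists_lt_of_ciInf_lt hlt
      refine ciInf_le_of_le ⟨0, ?_⟩ k ?_
      · rintro y ⟨k, rfl⟩
        exact hZ0 k ω
      · simp only [hZ]
        linarith
    · exact le_ciInf fun k => hZ0 k ω
  have hA := upper_semicontinuity hH hconv hcont ⟨hXm, c, hcX⟩ Z hZb hZ0 hZdec hZinf
  have heq : ∀ k, (fun ω => X ω + Z k ω) = Y k := by
    intro k
    funext ω
    simp only [hZ]
    ring
  have hle : ∀ k, (∫ ω, X ω ∂P) ≤ H (fun ω => X ω + Z k ω) := by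
    intro k
    rw [heq k]
    exact hYH k
  calc (∫ ω, X ω ∂P) ≤ ⨅ k, H (fun ω => X ω + Z k ω) := le_ciInf hle
  _ ≤ H X := hA
end

section
/- Let L be a real vector space with a preorder ≤, let M ⊆ L be a linear subspace, and let C ⊆ L be nonempty with M ⊆ C, X + m ∈ C for all X ∈ C and m ∈ M, C exhaustive (for every X ∈ L there exists X₀ ∈ C with X₀ ≥ X), and X + m ≤ Y + m for all m ∈ M and all X, Y ∈ L with X ≤ Y. Let H : C → ℝ satisfy (P1') H(X + m) = H(X) + H(m) for all X ∈ C, m ∈ M; (P2') H(0) = 0 and H(X) ≥ 0 for all X ∈ C with X ≥ 0; (P3') inf{H(X₀) : X₀ ∈ C, X₀ ≥ X} > −∞ for all X ∈ L. Define R_Max(X) := inf{H(X₀) : X₀ ∈ C, X₀ ≥ X} for X ∈ L. Then: (a) R_Max : L → ℝ is a risk measure, i.e. R_Max(X + m) = R_Max(X) + R_Max(m) for all X ∈ L, m ∈ M, R_Max(0) = 0, and R_Max is monotone; (b) R_Max(X) ≤ H(X) for all X ∈ C and R_Max(m) = H(m) for all m ∈ M; (c) D_Min(X) := H(X) − R_Max(X)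 defines a deviation measure on C, i.e. D_Min(X + m) = D_Min(X) for all X ∈ C, m ∈ M, D_Min(0) = 0, and D_Min ≥ 0, so that H = R_Max + D_Min on C; (d) if R : L → ℝ is any risk measure (R(X + m) = R(X) + R(m) for X ∈ L, m ∈ M; R(0) = 0; R monotone) and D : C → ℝ any deviation measure (D(X + m) = D(X) for X ∈ C, m ∈ M; D(0) = 0; D ≥ 0) with H(X) = R(X) + D(X) for all X ∈ C, then R(X) ≤ R_Max(X) for all X ∈ L and D(X) ≥ D_Min(X) for all X ∈ C. -/
/-- The maximal risk measure `R_Max(X) = inf {H X₀ | X₀ ∈ C, X₀ ≥ X}` on a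
preordered vector space. -/
noncomputable def RMaxL {L : Type*} [Preorder L] (C : Set L) (H : L → ℝ) (X : L) : ℝ :=
  sInf {y : ℝ | ∃ X₀ ∈ C, X ≤ X₀ ∧ H X₀ = y}

/-- decomposition of a premium principle into the maximal risk
measure and the minimal deviation measure on a preordered vector space `L`,
with liquid claims `M` and claims `C`. -/
theorem abstract_maximal_decomposition {L : Type*}
    [AddCommGroup L] [Module ℝ L] [Preorder L]
    (M : Submodule ℝ L) (C : Set L)
    (hMC : (M : Set L) ⊆ C)
    (hCadd : ∀ X ∈ C, ∀ m ∈ M, X + m ∈ C)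
    (hexh : ∀ X : L, ∃ X₀ ∈ C, X ≤ X₀)
    (hord : ∀ m ∈ M, ∀ X Y : L, X ≤ Y → X + m ≤ Y + m)
    (H : L → ℝ)
    (hP1 : ∀ X ∈ C, ∀ m ∈ M, H (X + m) = H X + H m)
    (hP20 : H 0 = 0) (hP2 : ∀ X ∈ C, 0 ≤ X → 0 ≤ H X)
    (hP3 : ∀ X : L, BddBelow {y : ℝ | ∃ X₀ ∈ C, X ≤ X₀ ∧ H X₀ = y}) :
    -- (a) `R_Max` is a risk measure on `L`
    (∀ X : L, ∀ m ∈ M, RMaxL C H (X + m) = RMaxL C H X + RMaxL C H m) ∧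
    RMaxL C H 0 = 0 ∧
    (∀ X Y : L, X ≤ Y → RMaxL C H X ≤ RMaxL C H Y) ∧
    -- (b) `R_Max ≤ H` on `C` and `R_Max = H` on `M`
    (∀ X ∈ C, RMaxL C H X ≤ H X) ∧
    (∀ m ∈ M, RMaxL C H m = H m) ∧
    -- (c) `D_Min := H − R_Max` is a deviation measure on `C`
    (∀ X ∈ C, ∀ m ∈ M, H (X + m) - RMaxL C H (X + m) = H X - RMaxL C H X) ∧
    H 0 - RMaxL C H 0 = 0 ∧
    (∀ X ∈ C, 0 ≤ H X - RMaxL C H X) ∧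
    (∀ X ∈ C, H X = RMaxL C H X + (H X - RMaxL C H X)) ∧
    -- (d) maximality/minimality among all decompositions
    (∀ R D : L → ℝ,
      ((∀ X : L, ∀ m ∈ M, R (X + m) = R X + R m) ∧ R 0 = 0 ∧
        (∀ X Y : L, X ≤ Y → R X ≤ R Y)) →
      ((∀ X ∈ C, ∀ m ∈ M, D (X + m) = D X) ∧ D 0 = 0 ∧ (∀ X ∈ C, 0 ≤ D X)) →
      (∀ X ∈ C, H X = R X + D X) →
      (∀ X : L, R X ≤ RMaxL C H X) ∧ (∀ X ∈ C, H X - RMaxL C H X ≤ D X)) := by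
  have hne : ∀ X : L, ({y : ℝ | ∃ X₀ ∈ C, X ≤ X₀ ∧ H X₀ = y}).Nonempty := by
    intro X
    obtain ⟨X₀, hX₀C, hle⟩ := hexh X
    exact ⟨H X₀, X₀, hX₀C, hle, rfl⟩
  have hleH : ∀ X ∈ C, RMaxL C H X ≤ H X := by
    intro X hX
    exact csInf_le (hP3 X) ⟨X, hX, le_refl X, rfl⟩
  have hRm : ∀ m ∈ M, RMaxL C H m = H m := by
    intro m hm
    refine le_antisymm (hleH m (hMC hm)) ?_
    refine le_csInf (hne m) ?_
    rintro y ⟨X₀, hX₀C, hle, rfl⟩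
    have h1 : X₀ + (-m) ∈ C := hCadd X₀ hX₀C (-m) (neg_mem hm)
    have h2 : (0 : L) ≤ X₀ + (-m) := by
      have := hord (-m) (neg_mem hm) m X₀ hle
      simpa using this
    have h4 : X₀ + (-m) + m = X₀ := by abel
    have h3 : H X₀ = H (X₀ + (-m)) + H m := by
      have := hP1 (X₀ + (-m)) h1 m hm
      rw [h4] at this
      exact this
    have := hP2 _ h1 h2
    linarith
  have htrans : ∀ X : L, ∀ m ∈ M, RMaxL C H (X + m) = RMaxL C H X + H m := by
    intro X m hm
    refine le_antisymm ?_ ?_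
    · have hlb : RMaxL C H (X + m) - H m ≤ RMaxL C H X := by
        refine le_csInf (hne X) ?_
        rintro y ⟨X₀, hX₀C, hle, rfl⟩
        have h1 : X₀ + m ∈ C := hCadd X₀ hX₀C m hm
        have h2 : X + m ≤ X₀ + m := hord m hm X X₀ hle
        have h3 : RMaxL C H (X + m) ≤ H (X₀ + m) :=
          csInf_le (hP3 (X + m)) ⟨X₀ + m, h1, h2, rfl⟩
        rw [hP1 X₀ hX₀C m hm] at h3
        linarith
      linarith
    · refine le_csInf (hne (X + m)) ?_
      rintro y ⟨Y₀, hY₀C, hle, rfl⟩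
      have h1 : Y₀ + (-m) ∈ C := hCadd Y₀ hY₀C (-m) (neg_mem hm)
      have h2 : X ≤ Y₀ + (-m) := by
        have := hord (-m) (neg_mem hm) (X + m) Y₀ hle
        simpa using this
      have h4 : Y₀ + (-m) + m = Y₀ := by abel
      have h3 : H Y₀ = H (Y₀ + (-m)) + H m := by
        have := hP1 (Y₀ + (-m)) h1 m hm
        rw [h4] at this
        exact this
      have h5 : RMaxL C H X ≤ H (Y₀ + (-m)) :=
        csInf_le (hP3 X) ⟨Y₀ + (-m), h1, h2, rfl⟩
      linarith
  have hR0 : RMaxL C H 0 = 0 := by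
    rw [hRm 0 (zero_mem M), hP20]
  have hmono : ∀ X Y : L, X ≤ Y → RMaxL C H X ≤ RMaxL C H Y := by
    intro X Y hXY
    refine csInf_le_csInf (hP3 X) (hne Y) ?_
    rintro y ⟨X₀, hX₀C, hle, rfl⟩
    exact ⟨X₀, hX₀C, le_trans hXY hle, rfl⟩
  refine ⟨?_, hR0, hmono, hleH, hRm, ?_, ?_, ?_, ?_, ?_⟩
  · intro X m hm
    rw [htrans X m hm, hRm m hm]
  · intro X hX m hm
    rw [hP1 X hX m hm, htrans X m hm]
    ring
  · rw [hR0, hP20]; ring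
  · intro X hX
    have := hleH X hX
    linarith
  · intro X _
    ring
  · intro R D ⟨_, _, hRmono⟩ ⟨_, _, hDpos⟩ hHRD
    have hRle : ∀ X : L, R X ≤ RMaxL C H X := by
      intro X
      refine le_csInf (hne X) ?_
      rintro y ⟨X₀, hX₀C, hle, rfl⟩
      have h1 : R X ≤ R X₀ := hRmono X X₀ hle
      have h2 : H X₀ = R X₀ + D X₀ := hHRD X₀ hX₀C
      have := hDpos X₀ hX₀C
      linarith
    refine ⟨hRle, ?_⟩
    intro X hX
    have h1 : H X = R X + D X := hHRD X hX
    have := hRle X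
    linarith
end

section
/- Let L be a real vector space with a vector preorder ≤ (a preorder consistent with addition and scalar multiplication: X ≤ Y implies X + Z ≤ Y + Z for all Z ∈ L, and 0 ≤ X implies 0 ≤ cX for all c ≥ 0), let M ⊆ L be a linear subspace, and let C ⊆ L be a linear subspace with M ⊆ C that is exhaustive (for every X ∈ L there exists X₀ ∈ C with X₀ ≥ X). Let H : C → ℝ be convex and satisfy (P1') H(X + m) = H(X) + H(m) for all X ∈ C, m ∈ M; (P2') H(0) = 0 and H(X) ≥ 0 for all X ∈ C with X ≥ 0; (P3') inf{H(X₀) : X₀ ∈ C, X₀ ≥ X} > −∞ for all X ∈ L. Let L'₊ denote the set of monotone ℝ-linear functionals μ : L → ℝ, and set H*(μ) := sup_{X ∈ C} (μ(X) − H(X)) ∈ [0, ∞] and R_Max(X) := inf{H(X₀) : X₀ ∈ C, X₀ ≥ X} for X ∈ L. Then: (a) R_Max(X) = max_{μ ∈ L'₊} (μ(X) − H*(μ)) for all X ∈ L, the maximum being attained; (b) H*(μ) = sup_{X ∈ L} (μ(X) − R_Max(X)) for all μ ∈ L'₊; (c) if μ ∈ L'₊ satisfies H*(μ) < ∞, then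 μ(m) = H(m) for all m ∈ M. -/
/-- The convex dual `H*(μ) = sup_{X ∈ C} (μ X − H X)` of `H` at a linear
functional `μ`, valued in `EReal`. -/
noncomputable def HstarL {L : Type*} [AddCommGroup L] [Module ℝ L]
    (C : Set L) (H : L → ℝ) (μ : L →ₗ[ℝ] ℝ) : EReal :=
  ⨆ X ∈ C, ((μ X - H X : ℝ) : EReal)

/-- dual representation of the maximal risk measure of a convex
premium principle on a vector space `L` with a vector preorder, via monotone
linear functionals `μ : L → ℝ`. -/
theorem abstract_convex_dual_representation {L : Type*}
    [AddCommGroup L] [Module ℝ L] [Preorder L]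
    (hordadd : ∀ X Y Z : L, X ≤ Y → X + Z ≤ Y + Z)
    (hordsmul : ∀ X : L, 0 ≤ X → ∀ c : ℝ, 0 ≤ c → 0 ≤ c • X)
    (M C : Submodule ℝ L) (hMC : M ≤ C)
    (hexh : ∀ X : L, ∃ X₀ ∈ C, X ≤ X₀)
    (H : L → ℝ)
    (hconv : ∀ X ∈ C, ∀ Y ∈ C, ∀ l : ℝ, 0 ≤ l → l ≤ 1 →
      H (l • X + (1 - l) • Y) ≤ l * H X + (1 - l) * H Y)
    (hP1 : ∀ X ∈ C, ∀ m ∈ M, H (X + m) = H X + H m)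
    (hP20 : H 0 = 0) (hP2 : ∀ X ∈ C, 0 ≤ X → 0 ≤ H X)
    (hP3 : ∀ X : L, BddBelow {y : ℝ | ∃ X₀ ∈ C, X ≤ X₀ ∧ H X₀ = y}) :
    -- (a) dual representation of `R_Max` with attained maximum
    (∀ X : L,
      (∃ μ : L →ₗ[ℝ] ℝ, Monotone μ ∧
        ((RMaxL (C : Set L) H X : ℝ) : EReal) = (μ X : ℝ) - HstarL (C : Set L) H μ) ∧
      (∀ μ : L →ₗ[ℝ] ℝ, Monotone μ →
        ((μ X : ℝ) : EReal) - HstarL (C : Set L) H μ ≤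
          ((RMaxL (C : Set L) H X : ℝ) : EReal))) ∧
    -- (b) `H*` is the penalty of `R_Max`
    (∀ μ : L →ₗ[ℝ] ℝ, Monotone μ →
      HstarL (C : Set L) H μ = ⨆ X : L, ((μ X - RMaxL (C : Set L) H X : ℝ) : EReal)) ∧
    -- (c) finite penalty forces consistency with `H` on `M`
    (∀ μ : L →ₗ[ℝ] ℝ, Monotone μ → HstarL (C : Set L) H μ < ⊤ →
      ∀ m ∈ M, μ m = H m) := by
  classical
  -- a small epsilon-of-room lemma for reals
  have hepsle : ∀ a b : ℝ, (∀ ε : ℝ, 0 < ε → a ≤ b + ε) → a ≤ b := by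
    intro a b h
    by_contra hc
    push_neg at hc
    have := h ((a - b)/2) (by linarith)
    linarith
  set S : L → Set ℝ := fun X => {y : ℝ | ∃ X₀ ∈ C, X ≤ X₀ ∧ H X₀ = y} with hSdef
  set f : L → ℝ := fun X => sInf (S X) with hfdef
  have hfeq : ∀ X : L, RMaxL (C : Set L) H X = f X := fun X => rfl
  have hSne : ∀ X, (S X).Nonempty := by
    intro X
    obtain ⟨X₀, h1, h2⟩ := hexh X
    exact ⟨H X₀, X₀, h1, h2, rfl⟩
  have hP3' : ∀ X : L, BddBelow (S X) := hP3
  have hfle : ∀ (X : L), ∀ X₀ ∈ C, X ≤ X₀ → f X ≤ H X₀ := by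
    intro X X₀ h1 h2
    exact csInf_le (hP3' X) ⟨X₀, h1, h2, rfl⟩
  have hfleH : ∀ X ∈ C, f X ≤ H X := fun X hX => hfle X X hX le_rfl
  have hmono : Monotone f := by
    intro X Y hXY
    refine csInf_le_csInf (hP3' X) (hSne Y) ?_
    rintro y ⟨X₀, h1, h2, h3⟩
    exact ⟨X₀, h1, hXY.trans h2, h3⟩
  -- order helpers
  have hsub0 : ∀ X Y : L, X ≤ Y → (0:L) ≤ Y - X := by
    intro X Y h
    have := hordadd X Y (-X) h
    simpa [sub_eq_add_neg] using this
  have hsmul_le : ∀ (X Y : L) (c : ℝ), 0 ≤ c → X ≤ Y → c • X ≤ c • Y := by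
    intro X Y c hc h
    have h1 := hordsmul _ (hsub0 X Y h) c hc
    have h2 := hordadd 0 (c • (Y - X)) (c • X) h1
    simpa [smul_sub, sub_add_cancel] using h2
  have hadd_le : ∀ (X Y Z W : L), X ≤ Y → Z ≤ W → X + Z ≤ Y + W := by
    intro X Y Z W h1 h2
    calc X + Z ≤ Y + Z := hordadd _ _ _ h1
    _ = Z + Y := add_comm _ _
    _ ≤ W + Y := hordadd _ _ _ h2
    _ = Y + W := add_comm _ _
  -- convexity of f
  have hfconv : ∀ (Y Z : L) (l : ℝ), 0 ≤ l → l ≤ 1 →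
      f (l • Y + (1 - l) • Z) ≤ l * f Y + (1 - l) * f Z := by
    intro Y Z l hl0 hl1
    refine hepsle _ _ ?_
    intro ε hε
    obtain ⟨a, ⟨Y₀, hY₀C, hY₀le, hY₀H⟩, ha⟩ :=
      exists_lt_of_csInf_lt (hSne Y) (show sInf (S Y) < f Y + ε/2 by
        rw [hfdef]; linarith)
    obtain ⟨b, ⟨Z₀, hZ₀C, hZ₀le, hZ₀H⟩, hb⟩ :=
      exists_lt_of_csInf_lt (hSne Z) (show sInf (S Z) < f Z + ε/2 by
        rw [hfdef]; linarith)
    have hmem : l • Y₀ + (1 - l) • Z₀ ∈ C :=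
      C.add_mem (C.smul_mem _ hY₀C) (C.smul_mem _ hZ₀C)
    have hord : l • Y + (1 - l) • Z ≤ l • Y₀ + (1 - l) • Z₀ :=
      hadd_le _ _ _ _ (hsmul_le _ _ _ hl0 hY₀le) (hsmul_le _ _ _ (by linarith) hZ₀le)
    have h1 : f (l • Y + (1 - l) • Z) ≤ H (l • Y₀ + (1 - l) • Z₀) := hfle _ _ hmem hord
    have h2 := hconv Y₀ hY₀C Z₀ hZ₀C l hl0 hl1
    have hY' : H Y₀ < f Y + ε/2 := by rw [hY₀H]; exact ha
    have hZ' : H Z₀ < f Z + ε/2 := by rw [hZ₀H]; exact hb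
    nlinarith [mul_le_mul_of_nonneg_left hY'.le hl0,
      mul_le_mul_of_nonneg_left hZ'.le (show (0:ℝ) ≤ 1 - l by linarith)]
  -- existence of monotone subgradients of f
  have hsubgrad : ∀ X : L, ∃ μ : L →ₗ[ℝ] ℝ, Monotone μ ∧ ∀ Y : L, f X + μ (Y - X) ≤ f Y := by
    intro X
    set Q : L → Set ℝ := fun v => {q | ∃ t : ℝ, 0 < t ∧ (f (X + t • v) - f X)/t = q} with hQdef
    have hQne : ∀ v, (Q v).Nonempty := fun v => ⟨_, 1, one_pos, rfl⟩
    have hQlb : ∀ v q, q ∈ Q v → f X - f (X - v) ≤ q := by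
      rintro v q ⟨t, ht, rfl⟩
      have ht1 : (0:ℝ) < t + 1 := by linarith
      have hl0 : 0 ≤ t/(t+1) := by positivity
      have hl1 : t/(t+1) ≤ 1 := by rw [div_le_one ht1]; linarith
      have hcomb : (t/(t+1)) • (X - v) + (1 - t/(t+1)) • (X + t • v) = X := by
        have h1 : t + 1 ≠ 0 := ne_of_gt ht1
        match_scalars <;> field_simp <;> ring
      have h := hfconv (X - v) (X + t • v) (t/(t+1)) hl0 hl1
      rw [hcomb] at h
      rw [le_div_iff₀ ht]
      have key : (t+1) * f X ≤ t * f (X - v) + f (X + t • v) := by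
        have h2 := mul_le_mul_of_nonneg_left h (le_of_lt ht1)
        have h1 : t + 1 ≠ 0 := ne_of_gt ht1
        calc (t+1) * f X
            ≤ (t+1) * (t/(t+1) * f (X - v) + (1 - t/(t+1)) * f (X + t • v)) := h2
          _ = t * f (X - v) + f (X + t • v) := by field_simp; ring
      nlinarith [key]
    have hQbdd : ∀ v, BddBelow (Q v) := fun v => ⟨_, fun q hq => hQlb v q hq⟩
    have hQmono : ∀ v (s t : ℝ), 0 < s → s ≤ t →
        (f (X + s • v) - f X)/s ≤ (f (X + t • v) - f X)/t := by
      intro v s t hs hst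
      have ht : 0 < t := lt_of_lt_of_le hs hst
      have hl0 : 0 ≤ s/t := by positivity
      have hl1 : s/t ≤ 1 := by rw [div_le_one ht]; exact hst
      have hcomb : (s/t) • (X + t • v) + (1 - s/t) • X = X + s • v := by
        have h1 : t ≠ 0 := ne_of_gt ht
        match_scalars <;> field_simp <;> ring
      have h := hfconv (X + t • v) X (s/t) hl0 hl1
      rw [hcomb] at h
      rw [div_le_div_iff₀ hs ht]
      have key : t * f (X + s • v) ≤ s * f (X + t • v) + (t - s) * f X := by
        have h2 := mul_le_mul_of_nonneg_left h (le_of_lt ht)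
        have h1 : t ≠ 0 := ne_of_gt ht
        calc t * f (X + s • v)
            ≤ t * (s/t * f (X + t • v) + (1 - s/t) * f X) := h2
          _ = s * f (X + t • v) + (t - s) * f X := by field_simp
      nlinarith [key]
    set N : L → ℝ := fun v => sInf (Q v) with hNdef
    have hNle : ∀ v, N v ≤ f (X + v) - f X := by
      intro v
      refine csInf_le (hQbdd v) ⟨1, one_pos, ?_⟩
      simp
    have hNhom : ∀ c : ℝ, 0 < c → ∀ v, N (c • v) = c * N v := by
      intro c hc v
      have hle1 : N (c • v) ≤ c * N v := by
        have h1 : ∀ q ∈ Q v, N (c • v) ≤ c * q := by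
          rintro q ⟨t, ht, rfl⟩
          refine csInf_le (hQbdd _) ⟨t/c, by positivity, ?_⟩
          rw [smul_smul, div_mul_cancel₀ t (ne_of_gt hc)]
          field_simp
        have h2 : ∀ q ∈ Q v, N (c • v) / c ≤ q := by
          intro q hq
          rw [div_le_iff₀ hc]
          calc N (c • v) ≤ c * q := h1 q hq
          _ = q * c := mul_comm _ _
        have h3 : N (c • v) / c ≤ N v := le_csInf (hQne v) h2
        calc N (c • v) = (N (c • v) / c) * c := by field_simp
        _ ≤ N v * c := mul_le_mul_of_nonneg_right h3 hc.le
        _ = c * N v := mul_comm _ _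
      have hle2 : c * N v ≤ N (c • v) := by
        refine le_csInf (hQne _) ?_
        rintro q ⟨t, ht, rfl⟩
        have hm : (f (X + (t*c) • v) - f X)/(t*c) ∈ Q v := ⟨t*c, by positivity, rfl⟩
        have h4 : N v ≤ (f (X + (t*c) • v) - f X)/(t*c) := csInf_le (hQbdd v) hm
        have h5 := mul_le_mul_of_nonneg_left h4 hc.le
        calc c * N v ≤ c * ((f (X + (t*c) • v) - f X)/(t*c)) := h5
        _ = (f (X + t • (c • v)) - f X)/t := by
            rw [smul_smul]
            field_simp
      exact le_antisymm hle1 hle2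
    have hNadd : ∀ u v, N (u + v) ≤ N u + N v := by
      intro u v
      refine hepsle _ _ ?_
      intro ε hε
      obtain ⟨q₁, ⟨s₁, hs₁, hq₁⟩, hlt₁⟩ :=
        exists_lt_of_csInf_lt (hQne u) (show sInf (Q u) < N u + ε/2 by
          rw [hNdef]; linarith)
      obtain ⟨q₂, ⟨s₂, hs₂, hq₂⟩, hlt₂⟩ :=
        exists_lt_of_csInf_lt (hQne v) (show sInf (Q v) < N v + ε/2 by
          rw [hNdef]; linarith)
      set s : ℝ := min s₁ s₂ with hsdef
      have hs : 0 < s := lt_min hs₁ hs₂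
      have h1 : (f (X + s • u) - f X)/s ≤ N u + ε/2 := by
        refine le_trans (hQmono u s s₁ hs (min_le_left _ _)) ?_
        rw [hq₁]; exact hlt₁.le
      have h2 : (f (X + s • v) - f X)/s ≤ N v + ε/2 := by
        refine le_trans (hQmono v s s₂ hs (min_le_right _ _)) ?_
        rw [hq₂]; exact hlt₂.le
      have hcomb : (1/2 : ℝ) • (X + s • u) + (1 - 1/2 : ℝ) • (X + s • v)
          = X + (s/2) • (u + v) := by
        match_scalars <;> field_simp <;> ring
      have h3 := hfconv (X + s • u) (X + s • v) (1/2) (by norm_num) (by norm_num)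
      rw [hcomb] at h3
      have h4 : N (u + v) ≤ (f (X + (s/2) • (u + v)) - f X)/(s/2) :=
        csInf_le (hQbdd _) ⟨s/2, by positivity, rfl⟩
      rw [div_le_iff₀ hs] at h1 h2
      have h5 : (f (X + (s/2) • (u + v)) - f X)/(s/2) ≤ N u + N v + ε := by
        rw [div_le_iff₀ (by positivity : (0:ℝ) < s/2)]
        nlinarith [h3, h1, h2]
      exact h4.trans h5
    -- Hahn-Banach
    have hf0 : ∀ x : ((0 : L →ₗ[ℝ] ℝ).toPMap ⊥).domain,
        ((0 : L →ₗ[ℝ] ℝ).toPMap ⊥) x ≤ N x := by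
      rintro ⟨x, hx⟩
      have hx0 : x = 0 := by simpa using hx
      subst hx0
      show ((0 : L →ₗ[ℝ] ℝ) (0:L)) ≤ N 0
      simp only [LinearMap.zero_apply]
      refine le_csInf (hQne 0) ?_
      intro q hq
      simpa using hQlb 0 q hq
    obtain ⟨g, -, hg⟩ := exists_extension_of_le_sublinear
      ((0 : L →ₗ[ℝ] ℝ).toPMap ⊥) N hNhom hNadd hf0
    refine ⟨g, ?_, ?_⟩
    · -- monotone
      intro a b hab
      have h1 : a - b ≤ 0 := by
        have := hordadd a b (-b) hab
        simpa [sub_eq_add_neg] using this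
      have h2 : X + (a - b) ≤ X := by
        have := hordadd (a - b) 0 X h1
        simpa [add_comm] using this
      have h3 : g (a - b) ≤ 0 := by
        calc g (a - b) ≤ N (a - b) := hg _
        _ ≤ f (X + (a - b)) - f X := hNle _
        _ ≤ 0 := by have := hmono h2; linarith
      rw [map_sub] at h3
      linarith
    · intro Y
      have h1 : g (Y - X) ≤ f (X + (Y - X)) - f X := (hg _).trans (hNle _)
      have h2 : X + (Y - X) = Y := by abel
      rw [h2] at h1
      linarith
  -- the "easy" inequality in EReal
  have hkey : ∀ (μ : L →ₗ[ℝ] ℝ), Monotone μ → ∀ X : L,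
      ((μ X - f X : ℝ) : EReal) ≤ HstarL (C : Set L) H μ := by
    intro μ hμ X
    by_contra hcon
    push_neg at hcon
    obtain ⟨x, hx1, hx2⟩ := EReal.lt_iff_exists_real_btwn.mp hcon
    have hx2' : x < μ X - f X := by exact_mod_cast hx2
    obtain ⟨a, ⟨X₀, hX₀C, hX₀le, haH⟩, ha⟩ :=
      exists_lt_of_csInf_lt (hSne X) (show sInf (S X) < μ X - x by
        have hfX : f X = sInf (S X) := rfl
        linarith)
    have hμle : μ X ≤ μ X₀ := hμ hX₀le
    have hxle : x ≤ μ X₀ - H X₀ := by rw [haH] at *; linarith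
    have h3 : (x : EReal) ≤ ((μ X₀ - H X₀ : ℝ) : EReal) := EReal.coe_le_coe_iff.mpr hxle
    have h4 : ((μ X₀ - H X₀ : ℝ) : EReal) ≤ HstarL (C : Set L) H μ := by
      rw [HstarL]
      exact le_iSup₂ (f := fun Y (_ : Y ∈ (C : Set L)) => ((μ Y - H Y : ℝ) : EReal)) X₀ hX₀C
    exact absurd (h3.trans h4) (not_le.mpr hx1)
  have hne_bot : ∀ μ : L →ₗ[ℝ] ℝ, HstarL (C : Set L) H μ ≠ ⊥ := by
    intro μ hb
    have h0 : ((μ 0 - H 0 : ℝ) : EReal) ≤ HstarL (C : Set L) H μ := by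
      rw [HstarL]
      exact le_iSup₂ (f := fun Y (_ : Y ∈ (C : Set L)) => ((μ Y - H Y : ℝ) : EReal))
        0 C.zero_mem
    rw [hb, le_bot_iff] at h0
    exact EReal.coe_ne_bot _ h0
  refine ⟨fun X => ⟨?_, ?_⟩, ?_, ?_⟩
  · -- (a) existence
    obtain ⟨μ, hμmono, hμsub⟩ := hsubgrad X
    have hub : HstarL (C : Set L) H μ ≤ ((μ X - f X : ℝ) : EReal) := by
      rw [HstarL]
      refine iSup₂_le ?_
      intro Y hY
      have h1 := hμsub Y
      rw [map_sub] at h1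
      have h2 := hfleH Y hY
      exact EReal.coe_le_coe_iff.mpr (by linarith)
    have heq : HstarL (C : Set L) H μ = ((μ X - f X : ℝ) : EReal) :=
      le_antisymm hub (hkey μ hμmono X)
    refine ⟨μ, hμmono, ?_⟩
    rw [hfeq, heq, ← EReal.coe_sub]
    norm_cast
    ring
  · -- (a) upper bound
    intro μ hμ
    rcases eq_or_ne (HstarL (C : Set L) H μ) ⊤ with htop | htop
    · rw [htop, EReal.sub_top]
      exact bot_le
    · obtain ⟨t, ht⟩ : ∃ t : ℝ, HstarL (C : Set L) H μ = (t : EReal) :=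
        ⟨(HstarL (C : Set L) H μ).toReal, (EReal.coe_toReal htop (hne_bot μ)).symm⟩
      have h1 := hkey μ hμ X
      rw [ht] at h1 ⊢
      have h2 : μ X - f X ≤ t := EReal.coe_le_coe_iff.mp h1
      rw [← EReal.coe_sub, hfeq]
      exact EReal.coe_le_coe_iff.mpr (by linarith)
  · -- (b)
    intro μ hμ
    refine le_antisymm ?_ ?_
    · rw [HstarL]
      refine iSup₂_le ?_
      intro Y hY
      have h1 : ((μ Y - H Y : ℝ) : EReal) ≤ ((μ Y - f Y : ℝ) : EReal) :=
        EReal.coe_le_coe_iff.mpr (by have := hfleH Y hY; linarith)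
      refine h1.trans ?_
      have := le_iSup (fun Z : L => ((μ Z - RMaxL (C : Set L) H Z : ℝ) : EReal)) Y
      rw [hfeq] at this
      exact this
    · refine iSup_le ?_
      intro Y
      rw [hfeq]
      exact hkey μ hμ Y
  · -- (c)
    intro μ hμ hfin m hm
    obtain ⟨K, hK⟩ : ∃ K : ℝ, HstarL (C : Set L) H μ = (K : EReal) :=
      ⟨(HstarL (C : Set L) H μ).toReal, (EReal.coe_toReal hfin.ne (hne_bot μ)).symm⟩
    have hbound : ∀ Y ∈ C, μ Y - H Y ≤ K := by
      intro Y hY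
      have h1 : ((μ Y - H Y : ℝ) : EReal) ≤ HstarL (C : Set L) H μ := by
        rw [HstarL]
        exact le_iSup₂ (f := fun Z (_ : Z ∈ (C : Set L)) => ((μ Z - H Z : ℝ) : EReal)) Y hY
      rw [hK] at h1
      exact EReal.coe_le_coe_iff.mp h1
    have hgen : ∀ m' ∈ M, ∀ n : ℕ, H ((n:ℝ) • m') = n * H m' := by
      intro m' hm' n
      induction n with
      | zero => simp [hP20]
      | succ n ih =>
        have hmem : (n:ℝ) • m' ∈ C := hMC (M.smul_mem _ hm')
        have h1 : ((n+1:ℕ):ℝ) • m' = (n:ℝ) • m' + m' := by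
          push_cast
          rw [add_smul, one_smul]
        rw [h1, hP1 _ hmem m' hm', ih]
        push_cast
        ring
    have habs : ∀ c : ℝ, (∀ n : ℕ, (n:ℝ) * c ≤ K) → c ≤ 0 := by
      intro c hc
      by_contra h
      push_neg at h
      obtain ⟨n, hn⟩ := exists_nat_gt (K / c)
      rw [div_lt_iff₀ h] at hn
      have := hc n
      linarith
    have hmul : ∀ m' ∈ M, ∀ n : ℕ, (n:ℝ) * (μ m' - H m') ≤ K := by
      intro m' hm' n
      have h1 := hbound ((n:ℝ) • m') (hMC (M.smul_mem _ hm'))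
      rw [map_smul, smul_eq_mul, hgen m' hm' n] at h1
      nlinarith [h1]
    have h1 : μ m - H m ≤ 0 := habs _ (hmul m hm)
    have hHneg : H (-m) = - H m := by
      have h2 := hP1 (-m) (hMC (M.neg_mem hm)) m hm
      rw [neg_add_cancel, hP20] at h2
      linarith
    have h3 : μ (-m) - H (-m) ≤ 0 := habs _ (hmul (-m) (M.neg_mem hm))
    rw [map_neg, hHneg] at h3
    linarith
end
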